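/- arXiv:1908.07655 — 4 statements merged into one kernel-verified Lean document; each statement's English description precedes it below -/
import Mathlib

section
/- Let (M,d) be a metric space and μ a Borel measure on M such that V(x,r) := μ(B(x,r)) is finite and strictly positive for all x ∈ M and r > 0, and suppose there exists a constant C_μ > 0 such that V(x,2r) ≤ C_μ V(x,r) for all x ∈ M and r > 0. Let β ≥ 2, let 0 < γ₁ < 1 and γ₂ > 1, set α₁ = γ₁ β and α₂ = γ₂ β, and define ν(s) = s^{-1-γ₁} for 0 < s ≤ 1 and ν(s) = s^{-1-γ₂} for s > 1. Suppose q : (0,∞) × M × M → [0,∞) is measurable and satisfies, for all u > 0 and x, y ∈ M, c₁ (1/V(x, u^{1/β})) exp( - c₂ (d(x,y)^β/u)^{1/(β-1)} ) ≤ q(u,x,y) ≤ c₃ (1/V(x, u^{1/β})) exp( - c₄ (d(x,y)^β/u)^{1/(β-1)} ), with constants c₁, c₂, c₃, c₄ > 0. Define J(x,y) = ∫₀^∞ q(u,x,y) ν(u) du for x ≠ y. Then there exist constants C₁, C₂ > 0 such that C₁ / ( V(x, d(x,y)) d(x,y)^{α₁} ) ≤ J(x,y) ≤ C₂ / ( V(x,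 d(x,y)) d(x,y)^{α₁} ) whenever 0 < d(x,y) ≤ 1, and C₁ / ( V(x, d(x,y)) d(x,y)^{α₂} ) ≤ J(x,y) ≤ C₂ / ( V(x, d(x,y)) d(x,y)^{α₂} ) whenever d(x,y) ≥ 1. -/
open MeasureTheory Set Real Metric

lemma aux_pow_two_between {t : ℝ} (ht : 1 ≤ t) :
    ∃ k : ℕ, t ≤ 2 ^ k ∧ (2:ℝ) ^ k ≤ 2 * t := by
  refine ⟨⌈Real.logb 2 t⌉₊, ?_, ?_⟩
  · have h1 : t = (2:ℝ) ^ Real.logb 2 t :=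
      (Real.rpow_logb two_pos (by norm_num) (by linarith)).symm
    calc t = (2:ℝ) ^ Real.logb 2 t := h1
      _ ≤ (2:ℝ) ^ ((⌈Real.logb 2 t⌉₊ : ℝ)) :=
        Real.rpow_le_rpow_of_exponent_le one_le_two (Nat.le_ceil _)
      _ = (2:ℝ) ^ (⌈Real.logb 2 t⌉₊ : ℕ) := Real.rpow_natCast 2 _
  · have h0 : 0 ≤ Real.logb 2 t := Real.logb_nonneg one_lt_two ht
    have h2 : (⌈Real.logb 2 t⌉₊ : ℝ) ≤ Real.logb 2 t + 1 := (Nat.ceil_lt_add_one h0).le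
    calc ((2:ℝ) ^ (⌈Real.logb 2 t⌉₊ : ℕ)) = (2:ℝ) ^ ((⌈Real.logb 2 t⌉₊ : ℝ)) :=
        (Real.rpow_natCast 2 _).symm
      _ ≤ (2:ℝ) ^ (Real.logb 2 t + 1) := Real.rpow_le_rpow_of_exponent_le one_le_two h2
      _ = 2 * t := by
        rw [Real.rpow_add two_pos, Real.rpow_logb two_pos (by norm_num) (by linarith),
          Real.rpow_one]; ring

lemma aux_exp_neg_le {n : ℕ} (hn : 1 ≤ n) {s : ℝ} (hs : 0 < s) :
    Real.exp (-s) ≤ ((n:ℝ) / s) ^ n := by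
  have hsn : s / n ≤ Real.exp (s / n) := (Real.add_one_le_exp _).trans' (by linarith)
  have h1 : (s / n) ^ n ≤ Real.exp s := by
    calc (s / n) ^ n ≤ (Real.exp (s / n)) ^ n :=
        pow_le_pow_left₀ (by positivity) hsn n
      _ = Real.exp ((n : ℝ) * (s / n)) := (Real.exp_nat_mul _ n).symm
      _ = Real.exp s := by
        congr 1; field_simp
  have hpos : (0:ℝ) < (s / n) ^ n := by positivity
  rw [Real.exp_neg]
  calc (Real.exp s)⁻¹ ≤ ((s / n) ^ n)⁻¹ := inv_anti₀ hpos h1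
    _ = ((n:ℝ) / s) ^ n := by
        rw [← inv_pow, inv_div]

lemma aux_meas_rpow (c : ℝ) : Measurable fun u : ℝ => u ^ c := by measurability

lemma aux_meas_ne (a b : ℝ) :
    Measurable fun u : ℝ => if u ≤ 1 then u ^ a else u ^ b :=
  Measurable.ite (measurableSet_le measurable_id measurable_const)
    (aux_meas_rpow a) (aux_meas_rpow b)

lemma aux_integral_Ioc_rpow {a b p : ℝ} (hab : a ≤ b) (h : -1 < p ∨ (p ≠ -1 ∧ 0 < a)) :
    IntegrableOn (fun u : ℝ => u ^ p) (Ioc a b) ∧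
      ∫ u in Ioc a b, u ^ p = (b ^ (p + 1) - a ^ (p + 1)) / (p + 1) := by
  have hii : IntervalIntegrable (fun u : ℝ => u ^ p) volume a b := by
    rcases h with h | ⟨hp, ha⟩
    · exact intervalIntegral.intervalIntegrable_rpow' h
    · exact intervalIntegral.intervalIntegrable_rpow
        (Or.inr (notMem_uIcc_of_lt ha (ha.trans_le hab)))
  have hval : ∫ u in Ioc a b, u ^ p = (b ^ (p + 1) - a ^ (p + 1)) / (p + 1) := by
    rw [← intervalIntegral.integral_of_le hab]
    apply integral_rpow
    rcases h with h | ⟨hp, ha⟩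
    · exact Or.inl h
    · exact Or.inr ⟨hp, notMem_uIcc_of_lt ha (ha.trans_le hab)⟩
  exact ⟨hii.1, hval⟩

set_option maxHeartbeats 2000000 in
/-- Claim 1(i) of Example 1.1: two-sided bounds for the jumping kernel
`J(x,y) = ∫₀^∞ q(u,x,y) ν(u) du` of the subordinate process. -/
theorem stmt_16 {M : Type*} [MetricSpace M] [MeasurableSpace M] [BorelSpace M]
    (μ : Measure M) (V : M → ℝ → ℝ)
    (hV : ∀ x r, V x r = (μ (ball x r)).toReal)
    (hfin : ∀ (x : M) (r : ℝ), 0 < r → μ (ball x r) < ⊤)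
    (hpos : ∀ (x : M) (r : ℝ), 0 < r → 0 < μ (ball x r))
    (Cμ : ℝ) (hCμ : 0 < Cμ)
    (hVD : ∀ (x : M) (r : ℝ), 0 < r → V x (2 * r) ≤ Cμ * V x r)
    (β γ₁ γ₂ : ℝ) (hβ : 2 ≤ β) (hγ₁ : 0 < γ₁) (hγ₁' : γ₁ < 1) (hγ₂ : 1 < γ₂)
    (α₁ α₂ : ℝ) (hα₁ : α₁ = γ₁ * β) (hα₂ : α₂ = γ₂ * β)
    (ν : ℝ → ℝ)
    (hν : ∀ s : ℝ, 0 < s → ν s = if s ≤ 1 then s ^ (-1 - γ₁) else s ^ (-1 - γ₂))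
    (q : ℝ → M → M → ℝ)
    (hqmeas : Measurable (fun p : ℝ × M × M => q p.1 p.2.1 p.2.2))
    (c₁ c₂ c₃ c₄ : ℝ) (hc₁ : 0 < c₁) (hc₂ : 0 < c₂) (hc₃ : 0 < c₃) (hc₄ : 0 < c₄)
    (hq : ∀ (u : ℝ) (x y : M), 0 < u →
      c₁ * (1 / V x (u ^ (1 / β))) *
          Real.exp (-(c₂ * (dist x y ^ β / u) ^ (1 / (β - 1)))) ≤ q u x y ∧
      q u x y ≤ c₃ * (1 / V x (u ^ (1 / β))) *
          Real.exp (-(c₄ * (dist x y ^ β / u) ^ (1 / (β - 1)))))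
    (J : M → M → ℝ)
    (hJ : ∀ x y : M, x ≠ y → J x y = ∫ u in Ioi (0 : ℝ), q u x y * ν u) :
    ∃ C₁ C₂ : ℝ, 0 < C₁ ∧ 0 < C₂ ∧ ∀ x y : M,
      (0 < dist x y → dist x y ≤ 1 →
        C₁ / (V x (dist x y) * dist x y ^ α₁) ≤ J x y ∧
        J x y ≤ C₂ / (V x (dist x y) * dist x y ^ α₁)) ∧
      (1 ≤ dist x y →
        C₁ / (V x (dist x y) * dist x y ^ α₂) ≤ J x y ∧
        J x y ≤ C₂ / (V x (dist x y) * dist x y ^ α₂)) := by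
  rcases isEmpty_or_nonempty M with hM | hM
  · exact ⟨1, 1, one_pos, one_pos, fun x => (hM.false x).elim⟩
  obtain ⟨x₀⟩ := hM
  have hβ0 : (0:ℝ) < β := by linarith
  have hβ1 : (0:ℝ) < β - 1 := by linarith
  have hγ₂0 : (0:ℝ) < γ₂ := by linarith
  -- basic volume facts
  have hVpos : ∀ (x : M) (s : ℝ), 0 < s → 0 < V x s := fun x s hs => by
    rw [hV]; exact ENNReal.toReal_pos (hpos x s hs).ne' (hfin x s hs).ne
  have hVmono : ∀ (x : M) (s t : ℝ), s ≤ t → 0 < t → V x s ≤ V x t := fun x s t hst ht => by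
    rw [hV, hV]
    exact ENNReal.toReal_mono (hfin x t ht).ne (measure_mono (Metric.ball_subset_ball hst))
  have hCμ1 : 1 ≤ Cμ := by
    have h1 := hVD x₀ 1 one_pos
    have h2 := hVmono x₀ 1 (2 * 1) (by norm_num) (by norm_num)
    have h3 := hVpos x₀ 1 one_pos
    nlinarith
  set θ : ℝ := Real.logb 2 Cμ with hθdef
  have h2θ : (2:ℝ) ^ θ = Cμ := Real.rpow_logb two_pos (by norm_num) hCμ
  have hθ0 : 0 ≤ θ := Real.logb_nonneg one_lt_two hCμ1
  -- doubling growth lemma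
  have hDbl : ∀ (x : M) (s t : ℝ), 0 < s → s ≤ t → V x t ≤ Cμ * (t / s) ^ θ * V x s := by
    intro x s t hs hst
    have ht : 0 < t := hs.trans_le hst
    have hts1 : 1 ≤ t / s := (one_le_div hs).mpr hst
    obtain ⟨k, hk1, hk2⟩ := aux_pow_two_between hts1
    have hstep : ∀ m : ℕ, V x ((2:ℝ) ^ m * s) ≤ Cμ ^ m * V x s := by
      intro m; induction m with
      | zero => simp
      | succ m ih =>
        have h2m : (0:ℝ) < (2:ℝ) ^ m * s := by positivity
        calc V x ((2:ℝ) ^ (m+1) * s) = V x (2 * ((2:ℝ) ^ m * s)) := by ring_nf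
          _ ≤ Cμ * V x ((2:ℝ) ^ m * s) := hVD x _ h2m
          _ ≤ Cμ * (Cμ ^ m * V x s) := mul_le_mul_of_nonneg_left ih hCμ.le
          _ = Cμ ^ (m+1) * V x s := by ring
    have htk : t ≤ (2:ℝ) ^ k * s := by
      have := (div_le_iff₀ hs).mp hk1; linarith
    have hck : Cμ ^ k ≤ Cμ * (t / s) ^ θ := by
      have e1 : Cμ ^ k = ((2:ℝ) ^ k) ^ θ := by
        rw [← h2θ, ← Real.rpow_natCast ((2:ℝ) ^ θ) k, ← Real.rpow_natCast (2:ℝ) k,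
          ← Real.rpow_mul (by norm_num), ← Real.rpow_mul (by norm_num), mul_comm]
      rw [e1]
      calc ((2:ℝ) ^ k) ^ θ ≤ (2 * (t / s)) ^ θ :=
          Real.rpow_le_rpow (by positivity) hk2 hθ0
        _ = (2:ℝ) ^ θ * (t / s) ^ θ := Real.mul_rpow (by norm_num) (by positivity)
        _ = Cμ * (t / s) ^ θ := by rw [h2θ]
    calc V x t ≤ V x ((2:ℝ) ^ k * s) := hVmono x t _ htk (by positivity)
      _ ≤ Cμ ^ k * V x s := hstep k
      _ ≤ Cμ * (t / s) ^ θ * V x s :=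
          mul_le_mul_of_nonneg_right hck (hVpos x s hs).le
  -- choice of n and δ
  set n : ℕ := max 1 ⌈(β - 1) * (θ / β + γ₂ + 1)⌉₊ with hndef
  have hn1 : 1 ≤ n := le_max_left _ _
  have hnge : (β - 1) * (θ / β + γ₂ + 1) ≤ (n : ℝ) := by
    calc (β - 1) * (θ / β + γ₂ + 1) ≤ (⌈(β - 1) * (θ / β + γ₂ + 1)⌉₊ : ℝ) := Nat.le_ceil _
      _ ≤ (n : ℝ) := by exact_mod_cast le_max_right _ _
  set δ : ℝ := (n : ℝ) / (β - 1) - θ / β with hδdef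
  have hδγ : γ₂ + 1 ≤ δ := by
    have h1 : θ / β + γ₂ + 1 ≤ (n : ℝ) / (β - 1) :=
      (le_div_iff₀ hβ1).mpr (by linarith [hnge])
    rw [hδdef]; linarith
  have hδγ₁ : γ₁ < δ := by linarith
  have hδγ₂ : γ₂ < δ := by linarith
  have hδγ₁' : (0:ℝ) < δ - γ₁ := by linarith
  have hδγ₂' : (0:ℝ) < δ - γ₂ := by linarith
  -- constants
  set K : ℝ := c₃ * max 1 (Cμ * (((n:ℝ) / c₄) ^ n)) with hKdef
  have hK0 : 0 < K := by positivity
  have hKc₃ : c₃ ≤ K := by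
    rw [hKdef]; nlinarith [le_max_left (1:ℝ) (Cμ * (((n:ℝ) / c₄) ^ n))]
  have hKbig : c₃ * (Cμ * (((n:ℝ) / c₄) ^ n)) ≤ K := by
    rw [hKdef]
    exact mul_le_mul_of_nonneg_left (le_max_right _ _) hc₃.le
  set A : ℝ := 1 / (δ - γ₁) + 1 / (δ - γ₂) + 1 / γ₁ + 1 / γ₂ with hAdef
  have hA0 : 0 < A := by
    rw [hAdef]
    have h1 := one_div_pos.mpr hδγ₁'
    have h2 := one_div_pos.mpr hδγ₂'
    have h3 := one_div_pos.mpr hγ₁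
    have h4 := one_div_pos.mpr hγ₂0
    linarith
  set cU : ℝ := K * A with hcUdef
  have hcU0 : 0 < cU := by rw [hcUdef]; exact mul_pos hK0 hA0
  set cL : ℝ := min (c₁ * Real.exp (-(2 * c₂)) / 2)
      (c₁ * Real.exp (-c₂) * (2:ℝ) ^ (-1 - γ₂) / Cμ) with hcLdef
  have hcLle₁ : cL ≤ c₁ * Real.exp (-(2 * c₂)) / 2 := by
    rw [hcLdef]; exact min_le_left _ _
  have hcLle₂ : cL ≤ c₁ * Real.exp (-c₂) * (2:ℝ) ^ (-1 - γ₂) / Cμ := by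
    rw [hcLdef]; exact min_le_right _ _
  have hcL0 : 0 < cL := by
    rw [hcLdef]
    apply lt_min
    · positivity
    · have : (0:ℝ) < (2:ℝ) ^ (-1 - γ₂) := Real.rpow_pos_of_pos two_pos _
      positivity
  clear_value θ n δ K A cU cL
  refine ⟨cL, cU, hcL0, hcU0, ?_⟩
  have main : ∀ (x y : M) (α γ : ℝ), 0 < dist x y → α = γ * β → 0 < γ →
      ((dist x y ≤ 1 ∧ γ = γ₁) ∨ (1 ≤ dist x y ∧ γ = γ₂)) →
      cL / (V x (dist x y) * dist x y ^ α) ≤ J x y ∧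
        J x y ≤ cU / (V x (dist x y) * dist x y ^ α) := by
    intro x y α γ hr hαγ hγ0 hcase
    have hxy : x ≠ y := by
      intro h; rw [h] at hr; simp at hr
    set r : ℝ := dist x y with hrdef
    set R : ℝ := r ^ β with hRdef
    have hR0 : 0 < R := Real.rpow_pos_of_pos hr β
    clear_value r R
    have hRr : R ^ (1 / β) = r := by
      rw [hRdef, ← Real.rpow_mul hr.le, mul_one_div, div_self hβ0.ne', Real.rpow_one]
    have hrα : r ^ α = R ^ γ := by
      rw [hαγ, mul_comm, Real.rpow_mul hr.le, ← hRdef]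
    have hVr : 0 < V x r := hVpos x r hr
    set f : ℝ → ℝ := fun u => q u x y * ν u with hfdef
    set NE : ℝ → ℝ := fun u => if u ≤ 1 then u ^ (-1 - γ₁) else u ^ (-1 - γ₂) with hNEdef
    clear_value f NE
    have hNE0 : ∀ u : ℝ, 0 < u → 0 < NE u := by
      intro u hu; rw [hNEdef]; dsimp only; split_ifs <;> positivity
    have hν' : ∀ u : ℝ, 0 < u → ν u = NE u := fun u hu => by
      rw [hν u hu, hNEdef]
    have hQ : ∀ u : ℝ, 0 < u →
        c₁ * (1 / V x (u ^ (1 / β))) * Real.exp (-(c₂ * (R / u) ^ (1 / (β - 1)))) ≤ q u x y ∧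
        q u x y ≤ c₃ * (1 / V x (u ^ (1 / β))) *
          Real.exp (-(c₄ * (R / u) ^ (1 / (β - 1)))) := by
      intro u hu
      have h := hq u x y hu
      rwa [← hrdef, ← hRdef] at h
    have hq0 : ∀ u : ℝ, 0 < u → 0 < q u x y := by
      intro u hu
      refine lt_of_lt_of_le ?_ (hQ u hu).1
      have h := hVpos x (u ^ (1 / β)) (Real.rpow_pos_of_pos hu _)
      positivity
    have hf0 : ∀ u ∈ Ioi (0:ℝ), 0 ≤ f u := by
      intro u hu
      rw [mem_Ioi] at hu
      rw [hfdef]; dsimp only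
      exact mul_nonneg (hq0 u hu).le (by rw [hν' u hu]; exact (hNE0 u hu).le)
    have hf0ae : 0 ≤ᵐ[volume.restrict (Ioi (0:ℝ))] f := by
      filter_upwards [ae_restrict_mem measurableSet_Ioi] with u hu using hf0 u hu
    set g : ℝ → ℝ := fun u => (if u ≤ R then (u / R) ^ δ else 1) * NE u with hgdef
    clear_value g
    have hg0 : ∀ u : ℝ, 0 < u → 0 ≤ g u := by
      intro u hu; rw [hgdef]; dsimp only
      refine mul_nonneg ?_ (hNE0 u hu).le
      split_ifs <;> positivity
    -- pointwise domination
    have hfg : ∀ u ∈ Ioi (0:ℝ), f u ≤ K / V x r * g u := by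
      intro u hu
      rw [mem_Ioi] at hu
      have hw0 : 0 < u ^ (1 / β) := Real.rpow_pos_of_pos hu _
      have hVw : 0 < V x (u ^ (1 / β)) := hVpos x _ hw0
      by_cases huR : u ≤ R
      · -- small u
        have hwr : u ^ (1 / β) ≤ r := by
          rw [← hRr]; exact Real.rpow_le_rpow hu.le huR (by positivity)
        have hRu0 : 0 < R / u := by positivity
        have huR0 : 0 < u / R := by positivity
        have hfrac : (r / u ^ (1 / β)) ^ θ = (R / u) ^ (θ / β) := by
          have h1 : r / u ^ (1 / β) = (R / u) ^ (1 / β) := by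
            rw [Real.div_rpow hR0.le hu.le, hRr]
          rw [h1, ← Real.rpow_mul hRu0.le]
          congr 1; ring
        have h1V : 1 / V x (u ^ (1 / β)) ≤ Cμ * (R / u) ^ (θ / β) / V x r := by
          rw [div_le_div_iff₀ hVw hVr, one_mul]
          calc V x r ≤ Cμ * (r / u ^ (1 / β)) ^ θ * V x (u ^ (1 / β)) := hDbl x _ r hw0 hwr
            _ = Cμ * (R / u) ^ (θ / β) * V x (u ^ (1 / β)) := by rw [hfrac]
        have ht0 : 0 < (R / u) ^ (1 / (β - 1)) := Real.rpow_pos_of_pos hRu0 _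
        have hs0 : 0 < c₄ * (R / u) ^ (1 / (β - 1)) := by positivity
        have hexp2 : Real.exp (-(c₄ * (R / u) ^ (1 / (β - 1)))) ≤
            ((n:ℝ) / c₄) ^ n * (u / R) ^ ((n:ℝ) / (β - 1)) := by
          refine (aux_exp_neg_le hn1 hs0).trans_eq ?_
          have e1 : ((n:ℝ) / (c₄ * (R / u) ^ (1 / (β - 1)))) ^ n
              = ((n:ℝ) / c₄) ^ n * (((R / u) ^ (1 / (β - 1)))⁻¹) ^ n := by
            rw [← mul_pow]; congr 1; field_simp
          have e2 : ((R / u) ^ (1 / (β - 1)))⁻¹ = (u / R) ^ (1 / (β - 1)) := by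
            rw [← Real.inv_rpow hRu0.le, inv_div]
          rw [e1, e2]; congr 1
          rw [← Real.rpow_natCast ((u / R) ^ (1 / (β - 1))) n, ← Real.rpow_mul huR0.le]
          congr 1; field_simp
        have hpow : (R / u) ^ (θ / β) * (u / R) ^ ((n:ℝ) / (β - 1)) = (u / R) ^ δ := by
          have e3 : (R / u) ^ (θ / β) = (u / R) ^ (-(θ / β)) := by
            rw [Real.rpow_neg huR0.le, ← Real.inv_rpow huR0.le, inv_div]
          rw [e3, ← Real.rpow_add huR0]
          congr 1; rw [hδdef]; ring
        have hgu : g u = (u / R) ^ δ * NE u := by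
          rw [hgdef]; dsimp only; rw [if_pos huR]
        have hb1 : q u x y ≤ c₃ * (Cμ * (R / u) ^ (θ / β) / V x r) *
            (((n:ℝ) / c₄) ^ n * (u / R) ^ ((n:ℝ) / (β - 1))) := by
          refine (hQ u hu).2.trans ?_
          apply mul_le_mul (mul_le_mul_of_nonneg_left h1V hc₃.le) hexp2 (Real.exp_pos _).le
          have h5 : (0:ℝ) ≤ Cμ * (R / u) ^ (θ / β) / V x r := by positivity
          positivity
        have hb2 : c₃ * (Cμ * (R / u) ^ (θ / β) / V x r) *
            (((n:ℝ) / c₄) ^ n * (u / R) ^ ((n:ℝ) / (β - 1)))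
            = c₃ * (Cμ * (((n:ℝ) / c₄) ^ n)) / V x r * ((u / R) ^ δ) := by
          rw [← hpow]; field_simp
        calc f u = q u x y * NE u := by rw [hfdef]; dsimp only; rw [hν' u hu]
          _ ≤ (c₃ * (Cμ * (((n:ℝ) / c₄) ^ n)) / V x r * ((u / R) ^ δ)) * NE u := by
              apply mul_le_mul_of_nonneg_right _ (hNE0 u hu).le
              rw [← hb2]; exact hb1
          _ = c₃ * (Cμ * (((n:ℝ) / c₄) ^ n)) / V x r * g u := by rw [hgu]; ring
          _ ≤ K / V x r * g u := by
              apply mul_le_mul_of_nonneg_right _ (hg0 u hu)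
              exact (div_le_div_iff_of_pos_right hVr).mpr hKbig
      · -- large u
        push_neg at huR
        have hwr : r ≤ u ^ (1 / β) := by
          rw [← hRr]; exact Real.rpow_le_rpow hR0.le huR.le (by positivity)
        have h1V : 1 / V x (u ^ (1 / β)) ≤ 1 / V x r :=
          one_div_le_one_div_of_le hVr (hVmono x r _ hwr hw0)
        have hexp1 : Real.exp (-(c₄ * (R / u) ^ (1 / (β - 1)))) ≤ 1 := by
          rw [Real.exp_le_one_iff]
          have h6 : (0:ℝ) ≤ (R / u) ^ (1 / (β - 1)) := Real.rpow_nonneg (by positivity) _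
          exact neg_nonpos.mpr (mul_nonneg hc₄.le h6)
        have hgu : g u = NE u := by
          rw [hgdef]; dsimp only; rw [if_neg (not_le.mpr huR), one_mul]
        calc f u = q u x y * NE u := by rw [hfdef]; dsimp only; rw [hν' u hu]
          _ ≤ (c₃ * (1 / V x r) * 1) * NE u := by
              apply mul_le_mul_of_nonneg_right _ (hNE0 u hu).le
              refine (hQ u hu).2.trans ?_
              apply mul_le_mul (mul_le_mul_of_nonneg_left h1V hc₃.le) hexp1
                (Real.exp_pos _).le
              have h7 : (0:ℝ) ≤ 1 / V x r := by positivity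
              positivity
          _ = c₃ / V x r * g u := by rw [hgu]; ring
          _ ≤ K / V x r * g u := by
              apply mul_le_mul_of_nonneg_right _ (hg0 u hu)
              exact (div_le_div_iff_of_pos_right hVr).mpr hKc₃
    -- measurability of f on Ioi 0
    have hNEm : Measurable NE := by
      rw [hNEdef]; exact aux_meas_ne _ _
    have hfm : AEStronglyMeasurable f (volume.restrict (Ioi (0:ℝ))) := by
      have hqm : Measurable fun u : ℝ => q u x y := by
        have h := hqmeas.comp
          (measurable_id.prodMk (measurable_const (a := ((x, y) : M × M))))
        exact h
      have hcongr : f =ᵐ[volume.restrict (Ioi (0:ℝ))] fun u => q u x y * NE u := by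
        filter_upwards [ae_restrict_mem measurableSet_Ioi] with u hu
        rw [hfdef]; dsimp only; rw [hν' u hu]
      exact ((hqm.mul hNEm).aestronglyMeasurable).congr hcongr.symm
    -- integrability of g and integral bound
    have hgsplit : IntegrableOn g (Ioi (0:ℝ)) ∧ ∫ u in Ioi (0:ℝ), g u ≤ A * R ^ (-γ) := by
      rcases hcase with ⟨hr1, hγeq⟩ | ⟨hr1, hγeq⟩
      · -- r ≤ 1, γ = γ₁, so R ≤ 1
        have hR1 : R ≤ 1 := by
          rw [hRdef]; exact Real.rpow_le_one hr.le hr1 hβ0.le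
        have hRγ1 : (1:ℝ) ≤ R ^ (-γ₁) :=
          Real.one_le_rpow_of_pos_of_le_one_of_nonpos hR0 hR1 (by linarith)
        have hRγpos : (0:ℝ) < R ^ (-γ₁) := Real.rpow_pos_of_pos hR0 _
        -- piece 1 : Ioc 0 R
        have hp1 : (-1:ℝ) < δ - 1 - γ₁ := by linarith
        have heq1 : EqOn (fun u : ℝ => R ^ (-δ) * u ^ (δ - 1 - γ₁)) g (Ioc 0 R) := by
          intro u hu
          have hu0 : 0 < u := hu.1
          rw [hgdef, hNEdef]; dsimp only
          rw [if_pos hu.2, if_pos (hu.2.trans hR1),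
            Real.div_rpow hu0.le hR0.le, div_eq_mul_inv, ← Real.rpow_neg hR0.le,
            mul_comm (u ^ δ), mul_assoc, ← Real.rpow_add hu0]
          rw [show δ + (-1 - γ₁) = δ - 1 - γ₁ from by ring]
        have hint1 : IntegrableOn g (Ioc (0:ℝ) R) :=
          IntegrableOn.congr_fun
            (((aux_integral_Ioc_rpow hR0.le (Or.inl hp1)).1).const_mul
              (R ^ (-δ))) heq1 measurableSet_Ioc
        have hv1 : ∫ u in Ioc (0:ℝ) R, g u ≤ R ^ (-γ₁) * (1 / (δ - γ₁)) := by
          rw [← setIntegral_congr_fun measurableSet_Ioc heq1, integral_const_mul,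
            (aux_integral_Ioc_rpow hR0.le (Or.inl hp1)).2,
            show δ - 1 - γ₁ + 1 = δ - γ₁ by ring,
            Real.zero_rpow hδγ₁'.ne', sub_zero,
            ← mul_div_assoc, ← Real.rpow_add hR0,
            show -δ + (δ - γ₁) = -γ₁ by ring, mul_one_div]
        -- piece 2a : Ioc R 1
        have hIa := aux_integral_Ioc_rpow hR1 (Or.inr ⟨by intro h; linarith, hR0⟩)
          (p := -1 - γ₁)
        have heq2 : EqOn (fun u : ℝ => u ^ (-1 - γ₁)) g (Ioc R 1) := by
          intro u hu
          rw [hgdef, hNEdef]; dsimp only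
          rw [if_neg (not_le.mpr hu.1), if_pos hu.2, one_mul]
        have hint2 : IntegrableOn g (Ioc R 1) :=
          IntegrableOn.congr_fun hIa.1 heq2 measurableSet_Ioc
        have hv2 : ∫ u in Ioc R 1, g u ≤ R ^ (-γ₁) * (1 / γ₁) := by
          rw [← setIntegral_congr_fun measurableSet_Ioc heq2, hIa.2,
            show (-1:ℝ) - γ₁ + 1 = -γ₁ by ring, Real.one_rpow]
          have e : (1 - R ^ (-γ₁)) / (-γ₁) = (R ^ (-γ₁) - 1) / γ₁ := by
            rw [div_eq_div_iff (by linarith) (by linarith)]; ring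
          rw [e, mul_one_div]
          apply (div_le_div_iff_of_pos_right hγ₁).mpr; linarith
        -- piece 2b : Ioi 1
        have heq3 : EqOn (fun u : ℝ => u ^ (-1 - γ₂)) g (Ioi 1) := by
          intro u hu
          rw [mem_Ioi] at hu
          rw [hgdef, hNEdef]; dsimp only
          rw [if_neg (by linarith : ¬ u ≤ R), if_neg (not_le.mpr hu), one_mul]
        have hint3 : IntegrableOn g (Ioi (1:ℝ)) :=
          IntegrableOn.congr_fun (integrableOn_Ioi_rpow_of_lt (by linarith) one_pos)
            heq3 measurableSet_Ioi
        have hv3 : ∫ u in Ioi (1:ℝ), g u ≤ R ^ (-γ₁) * (1 / γ₂) := by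
          rw [← setIntegral_congr_fun measurableSet_Ioi heq3,
            integral_Ioi_rpow_of_lt (by linarith) one_pos, Real.one_rpow,
            show (-1:ℝ) - γ₂ + 1 = -γ₂ by ring, neg_div, div_neg, neg_neg]
          calc 1 / γ₂ = 1 * (1 / γ₂) := (one_mul _).symm
            _ ≤ R ^ (-γ₁) * (1 / γ₂) := by
                apply mul_le_mul_of_nonneg_right hRγ1; positivity
        have hint23 : IntegrableOn g (Ioi R) := by
          rw [← Ioc_union_Ioi_eq_Ioi hR1]
          exact hint2.union hint3
        have hintg : IntegrableOn g (Ioi (0:ℝ)) := by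
          rw [← Ioc_union_Ioi_eq_Ioi hR0.le]
          exact hint1.union hint23
        refine ⟨hintg, ?_⟩
        have hsplit1 : ∫ u in Ioi (0:ℝ), g u
            = (∫ u in Ioc (0:ℝ) R, g u) + ∫ u in Ioi R, g u := by
          rw [← setIntegral_union (Ioc_disjoint_Ioi le_rfl) measurableSet_Ioi hint1 hint23,
            Ioc_union_Ioi_eq_Ioi hR0.le]
        have hsplit2 : ∫ u in Ioi R, g u
            = (∫ u in Ioc R 1, g u) + ∫ u in Ioi (1:ℝ), g u := by
          rw [← setIntegral_union (Ioc_disjoint_Ioi le_rfl) measurableSet_Ioi hint2 hint3,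
            Ioc_union_Ioi_eq_Ioi hR1]
        rw [hsplit1, hsplit2, hγeq]
        have hAe : A * R ^ (-γ₁) = R ^ (-γ₁) * (1 / (δ - γ₁)) + R ^ (-γ₁) * (1 / (δ - γ₂))
            + R ^ (-γ₁) * (1 / γ₁) + R ^ (-γ₁) * (1 / γ₂) := by
          rw [hAdef]; ring
        have h8 : 0 ≤ R ^ (-γ₁) * (1 / (δ - γ₂)) := by positivity
        linarith [hv1, hv2, hv3]
      · -- 1 ≤ r, γ = γ₂, so 1 ≤ R
        have hR1 : (1:ℝ) ≤ R := by
          calc (1:ℝ) = 1 ^ β := (Real.one_rpow β).symm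
            _ ≤ r ^ β := Real.rpow_le_rpow zero_le_one hr1 hβ0.le
            _ = R := hRdef.symm
        have hRγpos : (0:ℝ) < R ^ (-γ₂) := Real.rpow_pos_of_pos hR0 _
        have hRδγ : R ^ (-δ) ≤ R ^ (-γ₂) :=
          Real.rpow_le_rpow_of_exponent_le hR1 (by linarith)
        -- piece 1 : Ioc 0 1
        have hp1 : (-1:ℝ) < δ - 1 - γ₁ := by linarith
        have heq1 : EqOn (fun u : ℝ => R ^ (-δ) * u ^ (δ - 1 - γ₁)) g (Ioc 0 1) := by
          intro u hu
          have hu0 : 0 < u := hu.1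
          rw [hgdef, hNEdef]; dsimp only
          rw [if_pos (hu.2.trans hR1), if_pos hu.2,
            Real.div_rpow hu0.le hR0.le, div_eq_mul_inv, ← Real.rpow_neg hR0.le,
            mul_comm (u ^ δ), mul_assoc, ← Real.rpow_add hu0]
          rw [show δ + (-1 - γ₁) = δ - 1 - γ₁ from by ring]
        have hint1 : IntegrableOn g (Ioc (0:ℝ) 1) :=
          IntegrableOn.congr_fun
            (((aux_integral_Ioc_rpow zero_le_one (Or.inl hp1)).1).const_mul
              (R ^ (-δ))) heq1 measurableSet_Ioc
        have hv1 : ∫ u in Ioc (0:ℝ) 1, g u ≤ R ^ (-γ₂) * (1 / (δ - γ₁)) := by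
          rw [← setIntegral_congr_fun measurableSet_Ioc heq1, integral_const_mul,
            (aux_integral_Ioc_rpow zero_le_one (Or.inl hp1)).2,
            show δ - 1 - γ₁ + 1 = δ - γ₁ by ring,
            Real.zero_rpow hδγ₁'.ne', sub_zero, Real.one_rpow, mul_one_div]
          calc R ^ (-δ) / (δ - γ₁) ≤ R ^ (-γ₂) / (δ - γ₁) :=
              (div_le_div_iff_of_pos_right hδγ₁').mpr hRδγ
            _ = R ^ (-γ₂) * (1 / (δ - γ₁)) := by ring
        -- piece 2 : Ioc 1 R
        have hp2 : (-1:ℝ) < δ - 1 - γ₂ := by linarith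
        have heq2 : EqOn (fun u : ℝ => R ^ (-δ) * u ^ (δ - 1 - γ₂)) g (Ioc 1 R) := by
          intro u hu
          have hu0 : (0:ℝ) < u := lt_trans one_pos hu.1
          rw [hgdef, hNEdef]; dsimp only
          rw [if_pos hu.2, if_neg (not_le.mpr hu.1),
            Real.div_rpow hu0.le hR0.le, div_eq_mul_inv, ← Real.rpow_neg hR0.le,
            mul_comm (u ^ δ), mul_assoc, ← Real.rpow_add hu0]
          rw [show δ + (-1 - γ₂) = δ - 1 - γ₂ from by ring]
        have hint2 : IntegrableOn g (Ioc (1:ℝ) R) :=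
          IntegrableOn.congr_fun
            (((aux_integral_Ioc_rpow hR1 (Or.inl hp2)).1).const_mul
              (R ^ (-δ))) heq2 measurableSet_Ioc
        have hv2 : ∫ u in Ioc (1:ℝ) R, g u ≤ R ^ (-γ₂) * (1 / (δ - γ₂)) := by
          rw [← setIntegral_congr_fun measurableSet_Ioc heq2, integral_const_mul,
            (aux_integral_Ioc_rpow hR1 (Or.inl hp2)).2,
            show δ - 1 - γ₂ + 1 = δ - γ₂ by ring, Real.one_rpow]
          have e : R ^ (-δ) * ((R ^ (δ - γ₂) - 1) / (δ - γ₂))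
              ≤ R ^ (-δ) * (R ^ (δ - γ₂) / (δ - γ₂)) := by
            apply mul_le_mul_of_nonneg_left _ (Real.rpow_nonneg hR0.le _)
            apply (div_le_div_iff_of_pos_right hδγ₂').mpr; linarith
          refine e.trans (le_of_eq ?_)
          rw [← mul_div_assoc, ← Real.rpow_add hR0,
            show -δ + (δ - γ₂) = -γ₂ by ring, mul_one_div]
        -- piece 3 : Ioi R
        have heq3 : EqOn (fun u : ℝ => u ^ (-1 - γ₂)) g (Ioi R) := by
          intro u hu
          rw [mem_Ioi] at hu
          rw [hgdef, hNEdef]; dsimp only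
          rw [if_neg (not_le.mpr hu), if_neg (by linarith : ¬ u ≤ 1), one_mul]
        have hint3 : IntegrableOn g (Ioi R) :=
          IntegrableOn.congr_fun (integrableOn_Ioi_rpow_of_lt (by linarith) hR0)
            heq3 measurableSet_Ioi
        have hv3 : ∫ u in Ioi R, g u ≤ R ^ (-γ₂) * (1 / γ₂) := by
          rw [← setIntegral_congr_fun measurableSet_Ioi heq3,
            integral_Ioi_rpow_of_lt (by linarith) hR0,
            show (-1:ℝ) - γ₂ + 1 = -γ₂ by ring, neg_div, div_neg, neg_neg]
          rw [div_eq_mul_one_div]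
        have hint12 : IntegrableOn g (Ioc (0:ℝ) R) := by
          rw [← Ioc_union_Ioc_eq_Ioc zero_le_one hR1]
          exact hint1.union hint2
        have hintg : IntegrableOn g (Ioi (0:ℝ)) := by
          rw [← Ioc_union_Ioi_eq_Ioi hR0.le]
          exact hint12.union hint3
        refine ⟨hintg, ?_⟩
        have hsplit1 : ∫ u in Ioi (0:ℝ), g u
            = (∫ u in Ioc (0:ℝ) R, g u) + ∫ u in Ioi R, g u := by
          rw [← setIntegral_union (Ioc_disjoint_Ioi le_rfl) measurableSet_Ioi hint12 hint3,
            Ioc_union_Ioi_eq_Ioi hR0.le]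
        have hsplit2 : ∫ u in Ioc (0:ℝ) R, g u
            = (∫ u in Ioc (0:ℝ) 1, g u) + ∫ u in Ioc (1:ℝ) R, g u := by
          rw [← setIntegral_union (Ioc_disjoint_Ioc_of_le le_rfl) measurableSet_Ioc hint1 hint2,
            Ioc_union_Ioc_eq_Ioc zero_le_one hR1]
        rw [hsplit1, hsplit2, hγeq]
        have hAe : A * R ^ (-γ₂) = R ^ (-γ₂) * (1 / (δ - γ₁)) + R ^ (-γ₂) * (1 / (δ - γ₂))
            + R ^ (-γ₂) * (1 / γ₁) + R ^ (-γ₂) * (1 / γ₂) := by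
          rw [hAdef]; ring
        have h8 : 0 ≤ R ^ (-γ₂) * (1 / γ₁) := by positivity
        linarith [hv1, hv2, hv3]
    obtain ⟨hintg, hgbound⟩ := hgsplit
    have hKg_int : Integrable (fun u => K / V x r * g u) (volume.restrict (Ioi (0:ℝ))) :=
      hintg.const_mul _
    have hfgae : f ≤ᵐ[volume.restrict (Ioi (0:ℝ))] fun u => K / V x r * g u := by
      filter_upwards [ae_restrict_mem measurableSet_Ioi] with u hu using hfg u hu
    have hfint : IntegrableOn f (Ioi (0:ℝ)) := by
      refine Integrable.mono' hKg_int hfm ?_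
      filter_upwards [ae_restrict_mem measurableSet_Ioi] with u hu
      rw [Real.norm_eq_abs, abs_of_nonneg (hf0 u hu)]
      exact hfg u hu
    have hJeq : J x y = ∫ u in Ioi (0:ℝ), f u := by
      rw [hfdef]; exact hJ x y hxy
    have hrw : ∀ c : ℝ, c / (V x r * r ^ α) = c * R ^ (-γ) / V x r := by
      intro c
      have h1 : (R:ℝ) ^ γ ≠ 0 := (Real.rpow_pos_of_pos hR0 γ).ne'
      rw [hrα, Real.rpow_neg hR0.le]
      field_simp
    constructor
    · -- lower bound
      rw [hJeq, hrw]
      rcases hcase with ⟨hr1, hγeq⟩ | ⟨hr1, hγeq⟩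
      · -- r ≤ 1
        have hR1 : R ≤ 1 := by
          rw [hRdef]; exact Real.rpow_le_one hr.le hr1 hβ0.le
        have hE : 0 < Real.exp (-(2 * c₂)) := Real.exp_pos _
        have hRP : 0 < R ^ (-1 - γ₁) := Real.rpow_pos_of_pos hR0 _
        set cst : ℝ := c₁ * Real.exp (-(2 * c₂)) * R ^ (-1 - γ₁) / V x r with hcstdef
        clear_value cst
        have hsub : Ioc (R/2) R ⊆ Ioi (0:ℝ) := fun u hu =>
          lt_trans (by positivity) hu.1
        have hlb : ∀ u ∈ Ioc (R/2) R, cst ≤ f u := by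
          intro u hu
          rw [hfdef]; dsimp only
          have hu0 : 0 < u := lt_trans (by positivity) hu.1
          have hw0 : 0 < u ^ (1 / β) := Real.rpow_pos_of_pos hu0 _
          have hVw : 0 < V x (u ^ (1 / β)) := hVpos x _ hw0
          have hwr : u ^ (1 / β) ≤ r := by
            rw [← hRr]; exact Real.rpow_le_rpow hu0.le hu.2 (by positivity)
          have h1V : 1 / V x r ≤ 1 / V x (u ^ (1 / β)) :=
            one_div_le_one_div_of_le hVw (hVmono x _ r hwr hr)
          have hRu2 : (R / u) ^ (1 / (β - 1)) ≤ 2 := by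
            have h2 : R / u ≤ 2 := by
              rw [div_le_iff₀ hu0]; linarith [hu.1]
            calc (R / u) ^ (1 / (β - 1)) ≤ (2:ℝ) ^ (1 / (β - 1)) :=
                Real.rpow_le_rpow (by positivity) h2 (by positivity)
              _ ≤ (2:ℝ) ^ (1:ℝ) :=
                Real.rpow_le_rpow_of_exponent_le one_le_two
                  (by rw [div_le_one hβ1]; linarith)
              _ = 2 := Real.rpow_one 2
          have hexp : Real.exp (-(2 * c₂)) ≤ Real.exp (-(c₂ * (R / u) ^ (1 / (β - 1)))) := by
            rw [Real.exp_le_exp]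
            refine neg_le_neg ?_
            calc c₂ * (R / u) ^ (1 / (β - 1)) ≤ c₂ * 2 :=
                mul_le_mul_of_nonneg_left hRu2 hc₂.le
              _ = 2 * c₂ := mul_comm _ _
          have hνu : R ^ (-1 - γ₁) ≤ ν u := by
            rw [hν' u hu0, hNEdef]; dsimp only
            rw [if_pos (hu.2.trans hR1)]
            exact Real.rpow_le_rpow_of_nonpos hu0 hu.2 (by linarith)
          have hstep1 : cst ≤ c₁ * (1 / V x (u ^ (1 / β))) *
              Real.exp (-(c₂ * (R / u) ^ (1 / (β - 1)))) * R ^ (-1 - γ₁) := by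
            rw [hcstdef]
            have e : c₁ * Real.exp (-(2 * c₂)) * R ^ (-1 - γ₁) / V x r
                = c₁ * (1 / V x r) * Real.exp (-(2 * c₂)) * R ^ (-1 - γ₁) := by
              field_simp
            rw [e]
            apply mul_le_mul_of_nonneg_right _ hRP.le
            apply mul_le_mul (mul_le_mul_of_nonneg_left h1V hc₁.le) hexp hE.le
            exact mul_nonneg hc₁.le (one_div_nonneg.mpr hVw.le)
          refine hstep1.trans ?_
          have t2 : c₁ * (1 / V x (u ^ (1 / β))) *
              Real.exp (-(c₂ * (R / u) ^ (1 / (β - 1)))) * R ^ (-1 - γ₁)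
              ≤ q u x y * ν u :=
            mul_le_mul (hQ u hu0).1 hνu hRP.le (hq0 u hu0).le
          exact t2
        rw [hγeq]
        calc cL * R ^ (-γ₁) / V x r
            ≤ (c₁ * Real.exp (-(2 * c₂)) / 2) * R ^ (-γ₁) / V x r :=
              (div_le_div_iff_of_pos_right hVr).mpr
                (mul_le_mul_of_nonneg_right hcLle₁ (Real.rpow_nonneg hR0.le _))
          _ = (R - R / 2) * cst := by
              rw [hcstdef]
              have e2 : R ^ (-γ₁) = R ^ (-1 - γ₁) * R := by
                rw [← Real.rpow_add_one hR0.ne']; congr 1; ring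
              rw [e2]; field_simp; ring
          _ = ∫ u in Ioc (R/2) R, cst := by
              rw [setIntegral_const, Real.volume_real_Ioc_of_le (by linarith), smul_eq_mul]
          _ ≤ ∫ u in Ioc (R/2) R, f u :=
              setIntegral_mono_on (integrableOn_const measure_Ioc_lt_top.ne)
                (hfint.mono_set hsub) measurableSet_Ioc hlb
          _ ≤ ∫ u in Ioi (0:ℝ), f u :=
              setIntegral_mono_set hfint hf0ae (HasSubset.Subset.eventuallyLE hsub)
      · -- 1 ≤ r
        have hR1 : (1:ℝ) ≤ R := by
          calc (1:ℝ) = 1 ^ β := (Real.one_rpow β).symm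
            _ ≤ r ^ β := Real.rpow_le_rpow zero_le_one hr1 hβ0.le
            _ = R := hRdef.symm
        have hE : 0 < Real.exp (-c₂) := Real.exp_pos _
        have h2R : (0:ℝ) < 2 * R := by linarith
        have hRP : 0 < (2 * R) ^ (-1 - γ₂) := Real.rpow_pos_of_pos h2R _
        set cst : ℝ := c₁ * Real.exp (-c₂) * (2 * R) ^ (-1 - γ₂) / (Cμ * V x r) with hcstdef
        clear_value cst
        have hCV : 0 < Cμ * V x r := by positivity
        have hsub : Ioc R (2*R) ⊆ Ioi (0:ℝ) := fun u hu => hR0.trans hu.1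
        have hlb : ∀ u ∈ Ioc R (2*R), cst ≤ f u := by
          intro u hu
          rw [hfdef]; dsimp only
          have hu0 : 0 < u := hR0.trans hu.1
          have hw0 : 0 < u ^ (1 / β) := Real.rpow_pos_of_pos hu0 _
          have hVw : 0 < V x (u ^ (1 / β)) := hVpos x _ hw0
          have hwr : u ^ (1 / β) ≤ 2 * r := by
            calc u ^ (1 / β) ≤ (2*R) ^ (1 / β) :=
                Real.rpow_le_rpow hu0.le hu.2 (by positivity)
              _ = (2:ℝ) ^ (1 / β) * R ^ (1 / β) := Real.mul_rpow (by norm_num) hR0.le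
              _ ≤ 2 * r := by
                  rw [hRr]
                  apply mul_le_mul_of_nonneg_right _ hr.le
                  calc (2:ℝ) ^ (1 / β) ≤ (2:ℝ) ^ (1:ℝ) :=
                      Real.rpow_le_rpow_of_exponent_le one_le_two
                        (by rw [div_le_one hβ0]; linarith)
                    _ = 2 := Real.rpow_one 2
          have hVle : V x (u ^ (1 / β)) ≤ Cμ * V x r :=
            (hVmono x _ (2*r) hwr (by linarith)).trans (hVD x r hr)
          have h1V : 1 / (Cμ * V x r) ≤ 1 / V x (u ^ (1 / β)) :=
            one_div_le_one_div_of_le hVw hVle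
          have hexp : Real.exp (-c₂) ≤ Real.exp (-(c₂ * (R / u) ^ (1 / (β - 1)))) := by
            rw [Real.exp_le_exp]
            have hT : (R / u) ^ (1 / (β - 1)) ≤ 1 :=
              Real.rpow_le_one (by positivity) ((div_le_one hu0).mpr hu.1.le)
                (by positivity)
            refine neg_le_neg ?_
            calc c₂ * (R / u) ^ (1 / (β - 1)) ≤ c₂ * 1 :=
                mul_le_mul_of_nonneg_left hT hc₂.le
              _ = c₂ := mul_one _
          have hνu : (2*R) ^ (-1 - γ₂) ≤ ν u := by
            rw [hν' u hu0, hNEdef]; dsimp only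
            rw [if_neg (by push_neg; linarith [hu.1] : ¬ u ≤ 1)]
            exact Real.rpow_le_rpow_of_nonpos hu0 hu.2 (by linarith)
          have hstep1 : cst ≤ c₁ * (1 / V x (u ^ (1 / β))) *
              Real.exp (-(c₂ * (R / u) ^ (1 / (β - 1)))) * (2*R) ^ (-1 - γ₂) := by
            rw [hcstdef]
            have e : c₁ * Real.exp (-c₂) * (2*R) ^ (-1 - γ₂) / (Cμ * V x r)
                = c₁ * (1 / (Cμ * V x r)) * Real.exp (-c₂) * (2*R) ^ (-1 - γ₂) := by
              field_simp
            rw [e]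
            apply mul_le_mul_of_nonneg_right _ hRP.le
            apply mul_le_mul (mul_le_mul_of_nonneg_left h1V hc₁.le) hexp hE.le
            exact mul_nonneg hc₁.le (one_div_nonneg.mpr hVw.le)
          refine hstep1.trans ?_
          exact mul_le_mul (hQ u hu0).1 hνu hRP.le (hq0 u hu0).le
        rw [hγeq]
        calc cL * R ^ (-γ₂) / V x r
            ≤ (c₁ * Real.exp (-c₂) * (2:ℝ) ^ (-1 - γ₂) / Cμ) * R ^ (-γ₂) / V x r :=
              (div_le_div_iff_of_pos_right hVr).mpr
                (mul_le_mul_of_nonneg_right hcLle₂ (Real.rpow_nonneg hR0.le _))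
          _ = (2*R - R) * cst := by
              rw [hcstdef]
              have e1 : (2*R) ^ (-1 - γ₂) = (2:ℝ) ^ (-1 - γ₂) * R ^ (-1 - γ₂) :=
                Real.mul_rpow (by norm_num) hR0.le
              have e2 : R ^ (-γ₂) = R ^ (-1 - γ₂) * R := by
                rw [← Real.rpow_add_one hR0.ne']; congr 1; ring
              rw [e1, e2]; field_simp; ring
          _ = ∫ u in Ioc R (2*R), cst := by
              rw [setIntegral_const, Real.volume_real_Ioc_of_le (by linarith), smul_eq_mul]
          _ ≤ ∫ u in Ioc R (2*R), f u :=
              setIntegral_mono_on (integrableOn_const measure_Ioc_lt_top.ne)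
                (hfint.mono_set hsub) measurableSet_Ioc hlb
          _ ≤ ∫ u in Ioi (0:ℝ), f u :=
              setIntegral_mono_set hfint hf0ae (HasSubset.Subset.eventuallyLE hsub)
    · -- upper bound
      rw [hJeq, hrw]
      calc ∫ u in Ioi (0:ℝ), f u
          ≤ ∫ u in Ioi (0:ℝ), K / V x r * g u :=
            integral_mono_of_nonneg hf0ae hKg_int hfgae
        _ = K / V x r * ∫ u in Ioi (0:ℝ), g u := integral_const_mul _ _
        _ ≤ K / V x r * (A * R ^ (-γ)) :=
            mul_le_mul_of_nonneg_left hgbound (div_nonneg hK0.le hVr.le)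
        _ = cU * R ^ (-γ) / V x r := by rw [hcUdef]; ring
  intro x y
  constructor
  · intro h1 h2
    exact main x y α₁ γ₁ h1 hα₁ hγ₁ (Or.inl ⟨h2, rfl⟩)
  · intro h1
    exact main x y α₂ γ₂ (lt_of_lt_of_le one_pos h1) hα₂ hγ₂0 (Or.inr ⟨h1, rfl⟩)
end

section
/- Let d ≥ 1 be an integer and let φ_j : (0,∞) → (0,∞) be strictly increasing and continuous with φ_j(1) = 1, satisfying c (R/r)^{β₁} ≤ φ_j(R)/φ_j(r) ≤ c' (R/r)^{β₂} for all 0 < r ≤ R ≤ 1, for some constants c, c' > 0 and 0 < β₁ ≤ β₂ < 2. Let J : ℝ^d × ℝ^d → [0,∞) be measurable and suppose there are constants C₁ > 0 and K < ∞ such that J(x,y) ≤ C₁ / ( |x-y|^d φ_j(|x-y|) ) whenever 0 < |x-y| ≤ 1, and sup_{x ∈ ℝ^d} ∫_{\{y : |x-y| ≥ 1\}} |x-y|² J(x,y) dy ≤ K. Define φ(r) = φ_j(r) for 0 < r ≤ 1 and φ(r) = r² for r > 1. Then there exists a constant c₀ > 0 such that for every x ∈ ℝ^d and every r > 0, ∫_{ℝ^d}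 min( |x-y|²/r², 1 ) J(x,y) dy ≤ c₀ / φ(r). -/
open MeasureTheory Set Real Metric
set_option maxHeartbeats 1000000

lemma aux_geom {D w : ℝ} (hD : 0 ≤ D) (hw0 : 0 ≤ w) (hw1 : w < 1) :
    (∑' k : ℕ, ENNReal.ofReal (D * w ^ k)) ≤ ENNReal.ofReal (D * (1 - w)⁻¹) := by
  have h1 : ∀ k : ℕ, ENNReal.ofReal (D * w ^ k) = ENNReal.ofReal D * (ENNReal.ofReal w) ^ k := by
    intro k
    rw [ENNReal.ofReal_mul hD, ENNReal.ofReal_pow hw0]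
  simp_rw [h1]
  rw [ENNReal.tsum_mul_left, ENNReal.tsum_geometric, ENNReal.ofReal_mul hD]
  have h2 : ENNReal.ofReal ((1 - w)⁻¹) = (1 - ENNReal.ofReal w)⁻¹ := by
    rw [ENNReal.ofReal_inv_of_pos (show (0:ℝ) < 1 - w by linarith), ENNReal.ofReal_sub _ hw0, ENNReal.ofReal_one]
  rw [h2]

lemma pow_to_geom {q : ℝ} (hq : 0 ≤ q) (s : ℝ) (k : ℕ) :
    ((q : ℝ) ^ k) ^ s = (q ^ s) ^ k := by
  rw [← Real.rpow_natCast q k, ← Real.rpow_mul hq, mul_comm, Real.rpow_mul hq,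
    Real.rpow_natCast]

lemma radial_small (n : ℕ) (a : ℝ) (hs : 0 < a + n) :
    ∃ C : ℝ, 0 ≤ C ∧ ∀ (x : EuclideanSpace ℝ (Fin n)) (r : ℝ), 0 < r →
      (∫⁻ y in {y : EuclideanSpace ℝ (Fin n) | 0 < dist x y ∧ dist x y ≤ r},
        ENNReal.ofReal (dist x y ^ a)) ≤ ENNReal.ofReal (C * r ^ (a + n)) := by
  set V : ℝ := (volume (ball (0 : EuclideanSpace ℝ (Fin n)) 1)).toReal with hVdef
  have hV0 : 0 ≤ V := ENNReal.toReal_nonneg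
  have hVfin : volume (ball (0 : EuclideanSpace ℝ (Fin n)) 1) = ENNReal.ofReal V :=
    (ENNReal.ofReal_toReal measure_ball_lt_top.ne).symm
  set b : ℝ := max 1 ((2:ℝ) ^ (-a)) with hbdef
  have hb0 : 0 ≤ b := le_trans zero_le_one (le_max_left _ _)
  set w : ℝ := (1/2 : ℝ) ^ (a + n) with hwdef
  have hw0 : 0 ≤ w := Real.rpow_nonneg (by norm_num) _
  have hw1 : w < 1 := Real.rpow_lt_one (by norm_num) (by norm_num) hs
  refine ⟨b * V * (1 - w)⁻¹, mul_nonneg (mul_nonneg hb0 hV0) (inv_nonneg.2 (by linarith)), fun x r hr => ?_⟩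
  set A : ℕ → Set (EuclideanSpace ℝ (Fin n)) :=
    fun k => {y | (1/2:ℝ)^(k+1) * r < dist x y ∧ dist x y ≤ (1/2:ℝ)^k * r} with hAdef
  have cover : {y : EuclideanSpace ℝ (Fin n) | 0 < dist x y ∧ dist x y ≤ r} ⊆ ⋃ k, A k := by
    rintro y ⟨h0, h1⟩
    have hex : ∃ m : ℕ, (1/2:ℝ)^m * r < dist x y := by
      obtain ⟨m, hm⟩ := exists_pow_lt_of_lt_one (div_pos h0 hr) (by norm_num : (1/2:ℝ) < 1)
      exact ⟨m, by rwa [← lt_div_iff₀ hr]⟩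
    set k₀ := Nat.find hex with hk₀def
    have hk₀ : (1/2:ℝ)^k₀ * r < dist x y := Nat.find_spec hex
    have hk₀pos : 0 < k₀ := by
      rcases Nat.eq_zero_or_pos k₀ with h | h
      · exfalso; rw [h] at hk₀; simp at hk₀; linarith
      · exact h
    have hmin : ¬ ((1/2:ℝ)^(k₀-1) * r < dist x y) := Nat.find_min hex (Nat.sub_lt hk₀pos one_pos)
    refine mem_iUnion.2 ⟨k₀ - 1, ?_, not_lt.1 hmin⟩
    have : k₀ - 1 + 1 = k₀ := Nat.succ_pred_eq_of_pos hk₀pos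
    rw [this]; exact hk₀
  calc ∫⁻ y in {y : EuclideanSpace ℝ (Fin n) | 0 < dist x y ∧ dist x y ≤ r},
        ENNReal.ofReal (dist x y ^ a)
      ≤ ∫⁻ y in ⋃ k, A k, ENNReal.ofReal (dist x y ^ a) := lintegral_mono_set cover
    _ ≤ ∑' k, ∫⁻ y in A k, ENNReal.ofReal (dist x y ^ a) := lintegral_iUnion_le _ _
    _ ≤ ∑' k, ENNReal.ofReal ((b * V * r ^ (a + n)) * w ^ k) := by
        refine ENNReal.tsum_le_tsum fun k => ?_
        set ρ : ℝ := (1/2:ℝ)^k * r with hρdef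
        have hρ : 0 < ρ := by positivity
        have step1 : ∫⁻ y in A k, ENNReal.ofReal (dist x y ^ a)
            ≤ ∫⁻ _ in A k, ENNReal.ofReal (ρ ^ a * b) := by
          refine setLIntegral_mono measurable_const fun y hy => ?_
          obtain ⟨hy1, hy2⟩ := hy
          have hy1' : ρ / 2 < dist x y := by
            rw [hρdef]; rw [pow_succ] at hy1; nlinarith [hy1]
          refine ENNReal.ofReal_le_ofReal ?_
          rcases le_or_gt 0 a with ha | ha
          · have : dist x y ^ a ≤ ρ ^ a := Real.rpow_le_rpow dist_nonneg hy2 ha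
            calc dist x y ^ a ≤ ρ ^ a := this
              _ ≤ ρ ^ a * b := le_mul_of_one_le_right (Real.rpow_nonneg hρ.le _) (le_max_left _ _)
          · have h1 : dist x y ^ a ≤ (ρ / 2) ^ a :=
              Real.rpow_le_rpow_of_nonpos (by linarith) hy1'.le ha.le
            have h2 : (ρ / 2) ^ a = ρ ^ a * (2:ℝ) ^ (-a) := by
              rw [Real.div_rpow hρ.le (by norm_num), Real.rpow_neg (by norm_num), div_eq_mul_inv]
            calc dist x y ^ a ≤ (ρ / 2) ^ a := h1
              _ = ρ ^ a * (2:ℝ)^(-a) := h2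
              _ ≤ ρ ^ a * b := by
                  have := Real.rpow_nonneg hρ.le a
                  exact mul_le_mul_of_nonneg_left (le_max_right _ _) this
        have step2 : (∫⁻ _ in A k, ENNReal.ofReal (ρ ^ a * b) ∂(volume)) =
            ENNReal.ofReal (ρ ^ a * b) * volume (A k) := setLIntegral_const _ _
        have step3 : volume (A k) ≤ ENNReal.ofReal (ρ ^ (n:ℕ)) * ENNReal.ofReal V := by
          have hsub : A k ⊆ closedBall x ρ := by
            rintro y ⟨_, hy2⟩
            rw [mem_closedBall, dist_comm]; exact hy2
          calc volume (A k) ≤ volume (closedBall x ρ) := measure_mono hsub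
            _ = ENNReal.ofReal (ρ ^ (n:ℕ)) * ENNReal.ofReal V := by
                rw [Measure.addHaar_closedBall volume x hρ.le, finrank_euclideanSpace_fin, hVfin]
        have key : ρ ^ a * b * (ρ ^ (n:ℕ) * V) = (b * V * r ^ (a+n)) * w ^ k := by
          have h1 : ρ ^ a * ρ ^ (n:ℕ) = ρ ^ (a + n) := by
            rw [← Real.rpow_natCast ρ n, ← Real.rpow_add hρ]
          have h2 : ρ ^ (a + n) = w ^ k * r ^ (a+n) := by
            rw [hρdef, Real.mul_rpow (by positivity) hr.le, pow_to_geom (by norm_num : (0:ℝ) ≤ 1/2)]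
          calc ρ ^ a * b * (ρ ^ (n:ℕ) * V) = (ρ ^ a * ρ ^ (n:ℕ)) * (b * V) := by ring
            _ = (w ^ k * r ^ (a+n)) * (b * V) := by rw [h1, h2]
            _ = (b * V * r ^ (a+n)) * w ^ k := by ring
        calc ∫⁻ y in A k, ENNReal.ofReal (dist x y ^ a)
            ≤ ENNReal.ofReal (ρ ^ a * b) * volume (A k) := step1.trans (le_of_eq step2)
          _ ≤ ENNReal.ofReal (ρ ^ a * b) * (ENNReal.ofReal (ρ ^ (n:ℕ)) * ENNReal.ofReal V) := by
              gcongr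
          _ = ENNReal.ofReal (ρ ^ a * b * (ρ ^ (n:ℕ) * V)) := by
              rw [← ENNReal.ofReal_mul (by positivity), ← ENNReal.ofReal_mul (by positivity)]
          _ = ENNReal.ofReal ((b * V * r ^ (a+n)) * w ^ k) := by rw [key]
    _ ≤ ENNReal.ofReal ((b * V * r ^ (a+n)) * (1 - w)⁻¹) := aux_geom (by positivity) hw0 hw1
    _ = ENNReal.ofReal ((b * V * (1-w)⁻¹) * r ^ (a+n)) := by ring_nf

lemma radial_large (n : ℕ) (a : ℝ) (hs : a + n < 0) :
    ∃ C : ℝ, 0 ≤ C ∧ ∀ (x : EuclideanSpace ℝ (Fin n)) (r : ℝ), 0 < r →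
      (∫⁻ y in {y : EuclideanSpace ℝ (Fin n) | r ≤ dist x y},
        ENNReal.ofReal (dist x y ^ a)) ≤ ENNReal.ofReal (C * r ^ (a + n)) := by
  set V : ℝ := (volume (ball (0 : EuclideanSpace ℝ (Fin n)) 1)).toReal with hVdef
  have hV0 : 0 ≤ V := ENNReal.toReal_nonneg
  have hVfin : volume (ball (0 : EuclideanSpace ℝ (Fin n)) 1) = ENNReal.ofReal V :=
    (ENNReal.ofReal_toReal measure_ball_lt_top.ne).symm
  have ha : a ≤ 0 := by
    have : (0:ℝ) ≤ n := Nat.cast_nonneg n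
    linarith
  set w : ℝ := (2 : ℝ) ^ (a + n) with hwdef
  have hw0 : 0 ≤ w := Real.rpow_nonneg (by norm_num) _
  have hw1 : w < 1 := Real.rpow_lt_one_of_one_lt_of_neg (by norm_num) hs
  set b : ℝ := (2:ℝ) ^ (n:ℕ) with hbdef
  have hb0 : 0 ≤ b := by positivity
  refine ⟨b * V * (1 - w)⁻¹, mul_nonneg (mul_nonneg hb0 hV0) (inv_nonneg.2 (by linarith)),
    fun x r hr => ?_⟩
  set A : ℕ → Set (EuclideanSpace ℝ (Fin n)) :=
    fun k => {y | (2:ℝ)^k * r ≤ dist x y ∧ dist x y < (2:ℝ)^(k+1) * r} with hAdef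
  have cover : {y : EuclideanSpace ℝ (Fin n) | r ≤ dist x y} ⊆ ⋃ k, A k := by
    intro y h1
    replace h1 : r ≤ dist x y := h1
    have h0 : 0 < dist x y := lt_of_lt_of_le hr h1
    have hex : ∃ m : ℕ, dist x y < (2:ℝ)^m * r := by
      obtain ⟨m, hm⟩ := pow_unbounded_of_one_lt (dist x y / r) (by norm_num : (1:ℝ) < 2)
      exact ⟨m, by rw [div_lt_iff₀ hr] at hm; linarith⟩
    set k₀ := Nat.find hex with hk₀def
    have hk₀ : dist x y < (2:ℝ)^k₀ * r := Nat.find_spec hex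
    have hk₀pos : 0 < k₀ := by
      rcases Nat.eq_zero_or_pos k₀ with h | h
      · exfalso; rw [h] at hk₀; simp at hk₀; linarith
      · exact h
    have hmin : ¬ (dist x y < (2:ℝ)^(k₀-1) * r) := Nat.find_min hex (Nat.sub_lt hk₀pos one_pos)
    refine mem_iUnion.2 ⟨k₀ - 1, not_lt.1 hmin, ?_⟩
    have : k₀ - 1 + 1 = k₀ := Nat.succ_pred_eq_of_pos hk₀pos
    rw [this]; exact hk₀
  calc ∫⁻ y in {y : EuclideanSpace ℝ (Fin n) | r ≤ dist x y}, ENNReal.ofReal (dist x y ^ a)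
      ≤ ∫⁻ y in ⋃ k, A k, ENNReal.ofReal (dist x y ^ a) := lintegral_mono_set cover
    _ ≤ ∑' k, ∫⁻ y in A k, ENNReal.ofReal (dist x y ^ a) := lintegral_iUnion_le _ _
    _ ≤ ∑' k, ENNReal.ofReal ((b * V * r ^ (a + n)) * w ^ k) := by
        refine ENNReal.tsum_le_tsum fun k => ?_
        set ρ : ℝ := (2:ℝ)^k * r with hρdef
        have hρ : 0 < ρ := by positivity
        have step1 : ∫⁻ y in A k, ENNReal.ofReal (dist x y ^ a)
            ≤ ∫⁻ _ in A k, ENNReal.ofReal (ρ ^ a) := by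
          refine setLIntegral_mono measurable_const fun y hy => ?_
          exact ENNReal.ofReal_le_ofReal (Real.rpow_le_rpow_of_nonpos hρ hy.1 ha)
        have step2 : (∫⁻ _ in A k, ENNReal.ofReal (ρ ^ a) ∂(volume)) =
            ENNReal.ofReal (ρ ^ a) * volume (A k) := setLIntegral_const _ _
        have step3 : volume (A k) ≤ ENNReal.ofReal ((2 * ρ) ^ (n:ℕ)) * ENNReal.ofReal V := by
          have hsub : A k ⊆ closedBall x (2 * ρ) := by
            rintro y ⟨_, hy2⟩
            rw [mem_closedBall, dist_comm]
            rw [hρdef]; rw [pow_succ] at hy2; nlinarith [hy2]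
          calc volume (A k) ≤ volume (closedBall x (2 * ρ)) := measure_mono hsub
            _ = ENNReal.ofReal ((2 * ρ) ^ (n:ℕ)) * ENNReal.ofReal V := by
                rw [Measure.addHaar_closedBall volume x (by positivity), finrank_euclideanSpace_fin,
                  hVfin]
        have key : ρ ^ a * ((2 * ρ) ^ (n:ℕ) * V) = (b * V * r ^ (a+n)) * w ^ k := by
          have h1 : ρ ^ a * ρ ^ (n:ℕ) = ρ ^ (a + n) := by
            rw [← Real.rpow_natCast ρ n, ← Real.rpow_add hρ]
          have h2 : ρ ^ (a + n) = w ^ k * r ^ (a+n) := by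
            rw [hρdef, Real.mul_rpow (by positivity) hr.le, pow_to_geom (by norm_num : (0:ℝ) ≤ 2)]
          calc ρ ^ a * ((2 * ρ) ^ (n:ℕ) * V) = (ρ ^ a * ρ ^ (n:ℕ)) * (b * V) := by
                rw [mul_pow]; ring
            _ = (w ^ k * r ^ (a+n)) * (b * V) := by rw [h1, h2]
            _ = (b * V * r ^ (a+n)) * w ^ k := by ring
        calc ∫⁻ y in A k, ENNReal.ofReal (dist x y ^ a)
            ≤ ENNReal.ofReal (ρ ^ a) * volume (A k) := step1.trans (le_of_eq step2)
          _ ≤ ENNReal.ofReal (ρ ^ a) * (ENNReal.ofReal ((2*ρ) ^ (n:ℕ)) * ENNReal.ofReal V) := by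
              gcongr
          _ = ENNReal.ofReal (ρ ^ a * ((2*ρ) ^ (n:ℕ) * V)) := by
              rw [← ENNReal.ofReal_mul (by positivity), ← ENNReal.ofReal_mul (by positivity)]
          _ = ENNReal.ofReal ((b * V * r ^ (a+n)) * w ^ k) := by rw [key]
    _ ≤ ENNReal.ofReal ((b * V * r ^ (a+n)) * (1 - w)⁻¹) := aux_geom (by positivity) hw0 hw1
    _ = ENNReal.ofReal ((b * V * (1-w)⁻¹) * r ^ (a+n)) := by ring_nf

lemma hpow_t {t : ℝ} (ht : 0 < t) (n : ℕ) (β : ℝ) :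
    t ^ ((2:ℝ) - β - n) = t ^ (2:ℕ) * t ^ (-β) * (t ^ (n:ℕ))⁻¹ := by
  rw [← Real.rpow_natCast t 2, ← Real.rpow_natCast t n, ← Real.rpow_neg ht.le,
    ← Real.rpow_add ht, ← Real.rpow_add ht]
  congr 1

lemma hpow_t2 {t : ℝ} (ht : 0 < t) (n : ℕ) (β : ℝ) :
    t ^ (-β - (n:ℝ)) = t ^ (-β) * (t ^ (n:ℕ))⁻¹ := by
  rw [← Real.rpow_natCast t n, ← Real.rpow_neg ht.le, ← Real.rpow_add ht]
  congr 1

lemma hpow_r {r : ℝ} (hr : 0 < r) (β : ℝ) :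
    r ^ (β - (2:ℝ)) = r ^ β * (r ^ (2:ℕ))⁻¹ := by
  rw [← Real.rpow_natCast r 2, ← Real.rpow_neg hr.le, ← Real.rpow_add hr]
  congr 1
/-- Example 5.3: the CSJ-type bound
`∫ min(|x-y|²/r², 1) J(x,y) dy ≤ c₀/φ(r)` on `ℝ^d` for a jumping kernel with
mixed-scaling small jumps and a finite second moment for large jumps. -/
theorem stmt_17 (n : ℕ) (hn : 1 ≤ n)
    (φj : ℝ → ℝ) (hφjpos : ∀ r : ℝ, 0 < r → 0 < φj r)
    (hφjmono : StrictMonoOn φj (Ioi 0)) (hφjcont : ContinuousOn φj (Ioi 0))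
    (hφjone : φj 1 = 1)
    (c c' β₁ β₂ : ℝ) (hc : 0 < c) (hc' : 0 < c')
    (hβ₁ : 0 < β₁) (hβ₁₂ : β₁ ≤ β₂) (hβ₂ : β₂ < 2)
    (hscale : ∀ r R : ℝ, 0 < r → r ≤ R → R ≤ 1 →
      c * (R / r) ^ β₁ ≤ φj R / φj r ∧ φj R / φj r ≤ c' * (R / r) ^ β₂)
    (J : EuclideanSpace ℝ (Fin n) → EuclideanSpace ℝ (Fin n) → ℝ)
    (hJmeas : Measurable (Function.uncurry J)) (hJnonneg : ∀ x y, 0 ≤ J x y)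
    (C₁ K : ℝ) (hC₁ : 0 < C₁)
    (hJnear : ∀ x y : EuclideanSpace ℝ (Fin n), 0 < dist x y → dist x y ≤ 1 →
      J x y ≤ C₁ / (dist x y ^ n * φj (dist x y)))
    (hJfar : ∀ x : EuclideanSpace ℝ (Fin n),
      (∫⁻ y in {y : EuclideanSpace ℝ (Fin n) | 1 ≤ dist x y},
        ENNReal.ofReal (dist x y ^ 2 * J x y)) ≤ ENNReal.ofReal K)
    (φ : ℝ → ℝ)
    (hφ₁ : ∀ r : ℝ, 0 < r → r ≤ 1 → φ r = φj r)
    (hφ₂ : ∀ r : ℝ, 1 < r → φ r = r ^ 2) :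
    ∃ c₀ : ℝ, 0 < c₀ ∧ ∀ (x : EuclideanSpace ℝ (Fin n)) (r : ℝ), 0 < r →
      (∫ y, min (dist x y ^ 2 / r ^ 2) 1 * J x y) ≤ c₀ / φ r := by
  classical
  have hβ₂0 : 0 < β₂ := lt_of_lt_of_le hβ₁ hβ₁₂
  obtain ⟨CA, hCA0, hCA⟩ := radial_small n (2 - β₂ - n) (by push_cast; linarith)
  obtain ⟨CB, hCB0, hCB⟩ := radial_large n (-β₁ - n) (by push_cast; linarith)
  set K' : ℝ := max K 0 with hK'def
  have hK'0 : 0 ≤ K' := le_max_right _ _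
  set M : ℝ := K' + C₁ * c' * CA + C₁ * CB / c + 1 with hMdef
  have hM0 : 0 < M := by
    have h1 : 0 ≤ C₁ * c' * CA := by positivity
    have h2 : 0 ≤ C₁ * CB / c := by positivity
    rw [hMdef]; linarith
  refine ⟨M, hM0, fun x r hr => ?_⟩
  have hd : Measurable fun y : EuclideanSpace ℝ (Fin n) => dist x y :=
    (continuous_const.dist continuous_id).measurable
  have hJx : Measurable (J x) := hJmeas.of_uncurry_left
  have hfm : Measurable fun y => min (dist x y ^ 2 / r ^ 2) 1 * J x y :=
    (((hd.pow_const 2).div_const _).min measurable_const).mul hJx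
  have hf0 : ∀ y, 0 ≤ min (dist x y ^ 2 / r ^ 2) 1 * J x y := fun y =>
    mul_nonneg (le_min (by positivity) zero_le_one) (hJnonneg x y)
  have hφr : 0 < φ r := by
    rcases le_or_gt r 1 with h | h
    · rw [hφ₁ r hr h]; exact hφjpos r hr
    · rw [hφ₂ r h]; positivity
  rw [integral_eq_lintegral_of_nonneg_ae (Filter.Eventually.of_forall hf0)
    hfm.aestronglyMeasurable]
  refine ENNReal.toReal_le_of_le_ofReal (by positivity) ?_
  -- far-field bound
  set m : ℝ := min ((r ^ 2)⁻¹) 1 with hmdef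
  have hm0 : 0 ≤ m := le_min (by positivity) zero_le_one
  have hfar : (∫⁻ y in {y : EuclideanSpace ℝ (Fin n) | 1 ≤ dist x y},
      ENNReal.ofReal (min (dist x y ^ 2 / r ^ 2) 1 * J x y)) ≤ ENNReal.ofReal (m * K') := by
    have hpt : ∀ y ∈ {y : EuclideanSpace ℝ (Fin n) | 1 ≤ dist x y},
        ENNReal.ofReal (min (dist x y ^ 2 / r ^ 2) 1 * J x y)
          ≤ ENNReal.ofReal m * ENNReal.ofReal (dist x y ^ 2 * J x y) := by
      intro y hy
      replace hy : 1 ≤ dist x y := hy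
      rw [← ENNReal.ofReal_mul hm0]
      refine ENNReal.ofReal_le_ofReal ?_
      have hd2 : (1:ℝ) ≤ dist x y ^ 2 := by nlinarith
      have h1 : min (dist x y ^ 2 / r ^ 2) 1 ≤ m * dist x y ^ 2 := by
        rcases le_or_gt ((r ^ 2)⁻¹) 1 with h | h
        · rw [hmdef, min_eq_left h]
          calc min (dist x y ^ 2 / r ^ 2) 1 ≤ dist x y ^ 2 / r ^ 2 := min_le_left _ _
            _ = (r ^ 2)⁻¹ * dist x y ^ 2 := by ring
        · rw [hmdef, min_eq_right h.le, one_mul]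
          exact le_trans (min_le_right _ _) hd2
      calc min (dist x y ^ 2 / r ^ 2) 1 * J x y
          ≤ (m * dist x y ^ 2) * J x y := mul_le_mul_of_nonneg_right h1 (hJnonneg x y)
        _ = m * (dist x y ^ 2 * J x y) := by ring
    calc (∫⁻ y in {y : EuclideanSpace ℝ (Fin n) | 1 ≤ dist x y},
          ENNReal.ofReal (min (dist x y ^ 2 / r ^ 2) 1 * J x y))
        ≤ ∫⁻ y in {y : EuclideanSpace ℝ (Fin n) | 1 ≤ dist x y},
            ENNReal.ofReal m * ENNReal.ofReal (dist x y ^ 2 * J x y) :=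
          setLIntegral_mono
            (measurable_const.mul (((hd.pow_const 2).mul hJx).ennreal_ofReal)) hpt
      _ = ENNReal.ofReal m * ∫⁻ y in {y : EuclideanSpace ℝ (Fin n) | 1 ≤ dist x y},
            ENNReal.ofReal (dist x y ^ 2 * J x y) :=
          lintegral_const_mul' _ _ ENNReal.ofReal_ne_top
      _ ≤ ENNReal.ofReal m * ENNReal.ofReal K := by gcongr; exact hJfar x
      _ ≤ ENNReal.ofReal m * ENNReal.ofReal K' := by
          gcongr; exact le_max_left K 0
      _ = ENNReal.ofReal (m * K') := (ENNReal.ofReal_mul hm0).symm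
  -- the singleton has measure zero
  have hS0 : volume {y : EuclideanSpace ℝ (Fin n) | dist x y = 0} = 0 := by
    have hset : {y : EuclideanSpace ℝ (Fin n) | dist x y = 0} = closedBall x 0 := by
      ext y
      simp [Metric.mem_closedBall, dist_comm, le_antisymm_iff, dist_nonneg]
    rw [hset, Measure.addHaar_closedBall volume x le_rfl, finrank_euclideanSpace_fin,
      zero_pow (by omega : n ≠ 0)]
    simp
  rcases le_or_gt r 1 with hr1 | hr1
  · -- Case r ≤ 1
    have hφ : φ r = φj r := hφ₁ r hr hr1
    have hφjr : 0 < φj r := hφjpos r hr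
    have hφjr1 : φj r ≤ 1 := by
      rcases eq_or_lt_of_le hr1 with h | h
      · rw [h, hφjone]
      · rw [← hφjone]
        exact (hφjmono (mem_Ioi.2 hr) (mem_Ioi.2 one_pos) h).le
    set D1 : ℝ := C₁ * c' * r ^ (β₂ - (2:ℝ)) / φj r with hD1def
    have hD10 : 0 ≤ D1 := by positivity
    set D2 : ℝ := C₁ * r ^ β₁ / (c * φj r) with hD2def
    have hD20 : 0 ≤ D2 := by positivity
    -- pointwise bound on N1 = {0 < dist ≤ r}
    have hptN1 : ∀ y ∈ {y : EuclideanSpace ℝ (Fin n) | 0 < dist x y ∧ dist x y ≤ r},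
        ENNReal.ofReal (min (dist x y ^ 2 / r ^ 2) 1 * J x y)
          ≤ ENNReal.ofReal D1 * ENNReal.ofReal (dist x y ^ ((2:ℝ) - β₂ - n)) := by
      rintro y ⟨ht, htr⟩
      set t := dist x y with htdef
      rw [← ENNReal.ofReal_mul hD10]
      refine ENNReal.ofReal_le_ofReal ?_
      have hφjt : 0 < φj t := hφjpos t ht
      have hJb : J x y ≤ C₁ / (t ^ n * φj t) := hJnear x y ht (htr.trans hr1)
      have hratio : φj r / φj t ≤ c' * (r / t) ^ β₂ := (hscale t r ht htr hr1).2
      have h2 : (r / t) ^ β₂ = r ^ β₂ * t ^ (-β₂) := by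
        rw [Real.div_rpow hr.le ht.le, Real.rpow_neg ht.le, div_eq_mul_inv]
      have hinv : (φj t)⁻¹ ≤ c' * r ^ β₂ * t ^ (-β₂) * (φj r)⁻¹ := by
        calc (φj t)⁻¹ = (φj r / φj t) * (φj r)⁻¹ := by field_simp
          _ ≤ (c' * (r / t) ^ β₂) * (φj r)⁻¹ :=
              mul_le_mul_of_nonneg_right hratio (inv_nonneg.2 hφjr.le)
          _ = c' * r ^ β₂ * t ^ (-β₂) * (φj r)⁻¹ := by rw [h2]; ring
      calc min (t ^ 2 / r ^ 2) 1 * J x y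
          ≤ (t ^ 2 / r ^ 2) * (C₁ / (t ^ n * φj t)) :=
            mul_le_mul (min_le_left _ _) hJb (hJnonneg x y) (by positivity)
        _ = C₁ * t ^ 2 * (r ^ 2)⁻¹ * (t ^ n)⁻¹ * (φj t)⁻¹ := by
            rw [div_eq_mul_inv, div_eq_mul_inv, mul_inv]; ring
        _ ≤ C₁ * t ^ 2 * (r ^ 2)⁻¹ * (t ^ n)⁻¹ * (c' * r ^ β₂ * t ^ (-β₂) * (φj r)⁻¹) := by
            refine mul_le_mul_of_nonneg_left hinv (by positivity)
        _ = D1 * t ^ ((2:ℝ) - β₂ - n) := by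
            rw [hpow_t ht n β₂, hD1def, hpow_r hr β₂, div_eq_mul_inv]; ring
    -- pointwise bound on N2 = {r ≤ dist < 1}
    have hptN2 : ∀ y ∈ {y : EuclideanSpace ℝ (Fin n) | r ≤ dist x y ∧ dist x y < 1},
        ENNReal.ofReal (min (dist x y ^ 2 / r ^ 2) 1 * J x y)
          ≤ ENNReal.ofReal D2 * ENNReal.ofReal (dist x y ^ (-β₁ - (n:ℝ))) := by
      rintro y ⟨hrt, ht1⟩
      set t := dist x y with htdef
      have ht : 0 < t := lt_of_lt_of_le hr hrt
      rw [← ENNReal.ofReal_mul hD20]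
      refine ENNReal.ofReal_le_ofReal ?_
      have hφjt : 0 < φj t := hφjpos t ht
      have hJb : J x y ≤ C₁ / (t ^ n * φj t) := hJnear x y ht ht1.le
      have hratio : c * (t / r) ^ β₁ ≤ φj t / φj r := (hscale r t hr hrt ht1.le).1
      have hlow : c * (t / r) ^ β₁ * φj r ≤ φj t := by
        rw [le_div_iff₀ hφjr] at hratio; exact hratio
      have h2 : (c * (t / r) ^ β₁ * φj r)⁻¹ = c⁻¹ * r ^ β₁ * t ^ (-β₁) * (φj r)⁻¹ := by
        have h3 : ((t / r) ^ β₁)⁻¹ = r ^ β₁ * t ^ (-β₁) := by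
          rw [← Real.rpow_neg (div_nonneg ht.le hr.le), Real.div_rpow ht.le hr.le,
            Real.rpow_neg ht.le, Real.rpow_neg hr.le, div_eq_mul_inv, inv_inv]
          ring
        rw [mul_inv, mul_inv, h3]; ring
      have hinv : (φj t)⁻¹ ≤ c⁻¹ * r ^ β₁ * t ^ (-β₁) * (φj r)⁻¹ := by
        rw [← h2]
        refine inv_anti₀ (by positivity) hlow
      calc min (t ^ 2 / r ^ 2) 1 * J x y
          ≤ J x y := mul_le_of_le_one_left (hJnonneg x y) (min_le_right _ _)
        _ ≤ C₁ / (t ^ n * φj t) := hJb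
        _ = C₁ * (t ^ n)⁻¹ * (φj t)⁻¹ := by rw [div_eq_mul_inv, mul_inv]; ring
        _ ≤ C₁ * (t ^ n)⁻¹ * (c⁻¹ * r ^ β₁ * t ^ (-β₁) * (φj r)⁻¹) := by
            refine mul_le_mul_of_nonneg_left hinv (by positivity)
        _ = D2 * t ^ (-β₁ - (n:ℝ)) := by
            rw [hpow_t2 ht n β₁, hD2def, div_eq_mul_inv, mul_inv]; ring
    -- integral bounds on the pieces
    have hN1 : (∫⁻ y in {y : EuclideanSpace ℝ (Fin n) | 0 < dist x y ∧ dist x y ≤ r},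
        ENNReal.ofReal (min (dist x y ^ 2 / r ^ 2) 1 * J x y))
          ≤ ENNReal.ofReal (C₁ * c' * CA / φj r) := by
      have hrr : r ^ (β₂ - (2:ℝ)) * r ^ ((2:ℝ) - β₂) = 1 := by
        rw [← Real.rpow_add hr, show β₂ - (2:ℝ) + ((2:ℝ) - β₂) = 0 by ring, Real.rpow_zero]
      have hval : D1 * (CA * r ^ ((2:ℝ) - β₂ - n + n)) = C₁ * c' * CA / φj r := by
        rw [show (2:ℝ) - β₂ - n + n = 2 - β₂ by ring]
        calc D1 * (CA * r ^ ((2:ℝ) - β₂))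
            = (C₁ * c' * CA / φj r) * (r ^ (β₂ - (2:ℝ)) * r ^ ((2:ℝ) - β₂)) := by
              rw [hD1def]; ring
          _ = C₁ * c' * CA / φj r := by rw [hrr, mul_one]
      calc (∫⁻ y in {y : EuclideanSpace ℝ (Fin n) | 0 < dist x y ∧ dist x y ≤ r},
            ENNReal.ofReal (min (dist x y ^ 2 / r ^ 2) 1 * J x y))
          ≤ ∫⁻ y in {y : EuclideanSpace ℝ (Fin n) | 0 < dist x y ∧ dist x y ≤ r},
              ENNReal.ofReal D1 * ENNReal.ofReal (dist x y ^ ((2:ℝ) - β₂ - n)) :=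
            setLIntegral_mono (measurable_const.mul (Measurable.ennreal_ofReal (by fun_prop)))
              hptN1
        _ = ENNReal.ofReal D1 * ∫⁻ y in {y : EuclideanSpace ℝ (Fin n) |
              0 < dist x y ∧ dist x y ≤ r}, ENNReal.ofReal (dist x y ^ ((2:ℝ) - β₂ - n)) :=
            lintegral_const_mul' _ _ ENNReal.ofReal_ne_top
        _ ≤ ENNReal.ofReal D1 * ENNReal.ofReal (CA * r ^ ((2:ℝ) - β₂ - n + n)) := by
            gcongr; exact hCA x r hr
        _ = ENNReal.ofReal (D1 * (CA * r ^ ((2:ℝ) - β₂ - n + n))) :=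
            (ENNReal.ofReal_mul hD10).symm
        _ = ENNReal.ofReal (C₁ * c' * CA / φj r) := by rw [hval]
    have hN2 : (∫⁻ y in {y : EuclideanSpace ℝ (Fin n) | r ≤ dist x y ∧ dist x y < 1},
        ENNReal.ofReal (min (dist x y ^ 2 / r ^ 2) 1 * J x y))
          ≤ ENNReal.ofReal (C₁ * CB / (c * φj r)) := by
      have hrr : r ^ β₁ * r ^ (-β₁) = 1 := by
        rw [← Real.rpow_add hr, show β₁ + -β₁ = 0 by ring, Real.rpow_zero]
      have hval : D2 * (CB * r ^ (-β₁ - n + n)) = C₁ * CB / (c * φj r) := by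
        rw [show -β₁ - (n:ℝ) + n = -β₁ by ring]
        calc D2 * (CB * r ^ (-β₁))
            = (C₁ * CB / (c * φj r)) * (r ^ β₁ * r ^ (-β₁)) := by rw [hD2def]; ring
          _ = C₁ * CB / (c * φj r) := by rw [hrr, mul_one]
      calc (∫⁻ y in {y : EuclideanSpace ℝ (Fin n) | r ≤ dist x y ∧ dist x y < 1},
            ENNReal.ofReal (min (dist x y ^ 2 / r ^ 2) 1 * J x y))
          ≤ ∫⁻ y in {y : EuclideanSpace ℝ (Fin n) | r ≤ dist x y ∧ dist x y < 1},
              ENNReal.ofReal D2 * ENNReal.ofReal (dist x y ^ (-β₁ - (n:ℝ))) :=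
            setLIntegral_mono (measurable_const.mul (Measurable.ennreal_ofReal (by fun_prop)))
              hptN2
        _ = ENNReal.ofReal D2 * ∫⁻ y in {y : EuclideanSpace ℝ (Fin n) |
              r ≤ dist x y ∧ dist x y < 1}, ENNReal.ofReal (dist x y ^ (-β₁ - (n:ℝ))) :=
            lintegral_const_mul' _ _ ENNReal.ofReal_ne_top
        _ ≤ ENNReal.ofReal D2 * ∫⁻ y in {y : EuclideanSpace ℝ (Fin n) | r ≤ dist x y},
              ENNReal.ofReal (dist x y ^ (-β₁ - (n:ℝ))) := by
            gcongr
            exact fun h => h.1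
        _ ≤ ENNReal.ofReal D2 * ENNReal.ofReal (CB * r ^ (-β₁ - n + n)) := by
            gcongr; exact hCB x r hr
        _ = ENNReal.ofReal (D2 * (CB * r ^ (-β₁ - n + n))) := (ENNReal.ofReal_mul hD20).symm
        _ = ENNReal.ofReal (C₁ * CB / (c * φj r)) := by rw [hval]
    -- assemble
    have cover : (univ : Set (EuclideanSpace ℝ (Fin n))) ⊆
        (({y | dist x y = 0} ∪ {y | 0 < dist x y ∧ dist x y ≤ r})
          ∪ {y | r ≤ dist x y ∧ dist x y < 1}) ∪ {y | 1 ≤ dist x y} := by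
      intro y _
      rcases eq_or_lt_of_le (dist_nonneg : (0:ℝ) ≤ dist x y) with h0 | h0
      · exact Or.inl (Or.inl (Or.inl h0.symm))
      · rcases le_or_gt (dist x y) r with h1 | h1
        · exact Or.inl (Or.inl (Or.inr ⟨h0, h1⟩))
        · rcases lt_or_ge (dist x y) 1 with h2 | h2
          · exact Or.inl (Or.inr ⟨h1.le, h2⟩)
          · exact Or.inr h2
    have hzero : (∫⁻ y in {y : EuclideanSpace ℝ (Fin n) | dist x y = 0},
        ENNReal.ofReal (min (dist x y ^ 2 / r ^ 2) 1 * J x y)) = 0 :=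
      setLIntegral_measure_zero _ _ hS0
    have hmK : m * K' ≤ K' / φj r := by
      have hminle : m ≤ 1 := min_le_right _ _
      have h6 : K' ≤ K' / φj r := by
        rw [le_div_iff₀ hφjr]; nlinarith
      nlinarith
    have hfinal : C₁ * c' * CA / φj r + C₁ * CB / (c * φj r) + m * K' ≤ M / φ r := by
      rw [hφ]
      have h7 : C₁ * CB / (c * φj r) = (C₁ * CB / c) / φj r := by rw [div_div]
      have h8 : (0:ℝ) ≤ 1 / φj r := by positivity
      have h9 : M / φj r = K' / φj r + (C₁ * c' * CA) / φj r + (C₁ * CB / c) / φj r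
          + 1 / φj r := by
        rw [hMdef, add_div, add_div, add_div]
      linarith
    calc (∫⁻ y, ENNReal.ofReal (min (dist x y ^ 2 / r ^ 2) 1 * J x y))
        = ∫⁻ y in univ, ENNReal.ofReal (min (dist x y ^ 2 / r ^ 2) 1 * J x y) :=
          (setLIntegral_univ _).symm
      _ ≤ ∫⁻ y in (({y | dist x y = 0} ∪ {y | 0 < dist x y ∧ dist x y ≤ r})
            ∪ {y | r ≤ dist x y ∧ dist x y < 1}) ∪ {y | 1 ≤ dist x y},
            ENNReal.ofReal (min (dist x y ^ 2 / r ^ 2) 1 * J x y) :=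
          lintegral_mono_set cover
      _ ≤ (((∫⁻ y in {y : EuclideanSpace ℝ (Fin n) | dist x y = 0},
              ENNReal.ofReal (min (dist x y ^ 2 / r ^ 2) 1 * J x y))
            + ∫⁻ y in {y : EuclideanSpace ℝ (Fin n) | 0 < dist x y ∧ dist x y ≤ r},
              ENNReal.ofReal (min (dist x y ^ 2 / r ^ 2) 1 * J x y))
            + ∫⁻ y in {y : EuclideanSpace ℝ (Fin n) | r ≤ dist x y ∧ dist x y < 1},
              ENNReal.ofReal (min (dist x y ^ 2 / r ^ 2) 1 * J x y))
            + ∫⁻ y in {y : EuclideanSpace ℝ (Fin n) | 1 ≤ dist x y},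
              ENNReal.ofReal (min (dist x y ^ 2 / r ^ 2) 1 * J x y) := by
          refine le_trans (lintegral_union_le _ _ _) ?_
          gcongr
          refine le_trans (lintegral_union_le _ _ _) ?_
          gcongr
          exact lintegral_union_le _ _ _
      _ ≤ ((0 + ENNReal.ofReal (C₁ * c' * CA / φj r)) + ENNReal.ofReal (C₁ * CB / (c * φj r)))
            + ENNReal.ofReal (m * K') := by
          exact add_le_add (add_le_add (add_le_add hzero.le hN1) hN2) hfar
      _ = ENNReal.ofReal (C₁ * c' * CA / φj r + C₁ * CB / (c * φj r) + m * K') := by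
          rw [zero_add, ← ENNReal.ofReal_add (by positivity) (by positivity),
            ← ENNReal.ofReal_add (by positivity) (mul_nonneg hm0 hK'0)]
      _ ≤ ENNReal.ofReal (M / φ r) := ENNReal.ofReal_le_ofReal hfinal
  · -- Case r > 1
    have hφ : φ r = r ^ 2 := hφ₂ r hr1
    set D1 : ℝ := C₁ * c' / r ^ 2 with hD1def
    have hD10 : 0 ≤ D1 := by positivity
    have hptN1 : ∀ y ∈ {y : EuclideanSpace ℝ (Fin n) | 0 < dist x y ∧ dist x y ≤ 1},
        ENNReal.ofReal (min (dist x y ^ 2 / r ^ 2) 1 * J x y)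
          ≤ ENNReal.ofReal D1 * ENNReal.ofReal (dist x y ^ ((2:ℝ) - β₂ - n)) := by
      rintro y ⟨ht, ht1⟩
      set t := dist x y with htdef
      rw [← ENNReal.ofReal_mul hD10]
      refine ENNReal.ofReal_le_ofReal ?_
      have hφjt : 0 < φj t := hφjpos t ht
      have hJb : J x y ≤ C₁ / (t ^ n * φj t) := hJnear x y ht ht1
      have hratio : φj 1 / φj t ≤ c' * (1 / t) ^ β₂ := (hscale t 1 ht ht1 le_rfl).2
      have hinv : (φj t)⁻¹ ≤ c' * t ^ (-β₂) := by
        have h2 : (1 / t) ^ β₂ = t ^ (-β₂) := by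
          rw [Real.div_rpow zero_le_one ht.le, Real.one_rpow, Real.rpow_neg ht.le, one_div]
        rw [hφjone, one_div] at hratio
        rw [← h2]; exact hratio
      calc min (t ^ 2 / r ^ 2) 1 * J x y
          ≤ (t ^ 2 / r ^ 2) * (C₁ / (t ^ n * φj t)) :=
            mul_le_mul (min_le_left _ _) hJb (hJnonneg x y) (by positivity)
        _ = C₁ * t ^ 2 * (r ^ 2)⁻¹ * (t ^ n)⁻¹ * (φj t)⁻¹ := by
            rw [div_eq_mul_inv, div_eq_mul_inv, mul_inv]; ring
        _ ≤ C₁ * t ^ 2 * (r ^ 2)⁻¹ * (t ^ n)⁻¹ * (c' * t ^ (-β₂)) := by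
            refine mul_le_mul_of_nonneg_left hinv (by positivity)
        _ = D1 * t ^ ((2:ℝ) - β₂ - n) := by
            rw [hpow_t ht n β₂, hD1def, div_eq_mul_inv]; ring
    have hN1 : (∫⁻ y in {y : EuclideanSpace ℝ (Fin n) | 0 < dist x y ∧ dist x y ≤ 1},
        ENNReal.ofReal (min (dist x y ^ 2 / r ^ 2) 1 * J x y))
          ≤ ENNReal.ofReal (C₁ * c' * CA / r ^ 2) := by
      have hval : D1 * (CA * (1:ℝ) ^ ((2:ℝ) - β₂ - n + n)) = C₁ * c' * CA / r ^ 2 := by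
        rw [Real.one_rpow, hD1def]; ring
      calc (∫⁻ y in {y : EuclideanSpace ℝ (Fin n) | 0 < dist x y ∧ dist x y ≤ 1},
            ENNReal.ofReal (min (dist x y ^ 2 / r ^ 2) 1 * J x y))
          ≤ ∫⁻ y in {y : EuclideanSpace ℝ (Fin n) | 0 < dist x y ∧ dist x y ≤ 1},
              ENNReal.ofReal D1 * ENNReal.ofReal (dist x y ^ ((2:ℝ) - β₂ - n)) :=
            setLIntegral_mono (measurable_const.mul (Measurable.ennreal_ofReal (by fun_prop)))
              hptN1
        _ = ENNReal.ofReal D1 * ∫⁻ y in {y : EuclideanSpace ℝ (Fin n) |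
              0 < dist x y ∧ dist x y ≤ 1}, ENNReal.ofReal (dist x y ^ ((2:ℝ) - β₂ - n)) :=
            lintegral_const_mul' _ _ ENNReal.ofReal_ne_top
        _ ≤ ENNReal.ofReal D1 * ENNReal.ofReal (CA * (1:ℝ) ^ ((2:ℝ) - β₂ - n + n)) := by
            gcongr; exact hCA x 1 one_pos
        _ = ENNReal.ofReal (D1 * (CA * (1:ℝ) ^ ((2:ℝ) - β₂ - n + n))) :=
            (ENNReal.ofReal_mul hD10).symm
        _ = ENNReal.ofReal (C₁ * c' * CA / r ^ 2) := by rw [hval]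
    have cover : (univ : Set (EuclideanSpace ℝ (Fin n))) ⊆
        ({y | dist x y = 0} ∪ {y | 0 < dist x y ∧ dist x y ≤ 1}) ∪ {y | 1 ≤ dist x y} := by
      intro y _
      rcases eq_or_lt_of_le (dist_nonneg : (0:ℝ) ≤ dist x y) with h0 | h0
      · exact Or.inl (Or.inl h0.symm)
      · rcases le_or_gt (dist x y) 1 with h1 | h1
        · exact Or.inl (Or.inr ⟨h0, h1⟩)
        · exact Or.inr h1.le
    have hzero : (∫⁻ y in {y : EuclideanSpace ℝ (Fin n) | dist x y = 0},
        ENNReal.ofReal (min (dist x y ^ 2 / r ^ 2) 1 * J x y)) = 0 :=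
      setLIntegral_measure_zero _ _ hS0
    have hmK : m * K' ≤ K' / r ^ 2 := by
      have hminle : m ≤ (r ^ 2)⁻¹ := min_le_left _ _
      rw [div_eq_mul_inv, mul_comm (K') ((r^2)⁻¹)]
      exact mul_le_mul_of_nonneg_right hminle hK'0
    have hfinal : C₁ * c' * CA / r ^ 2 + m * K' ≤ M / φ r := by
      rw [hφ]
      have h7 : (0:ℝ) ≤ (C₁ * CB / c) / r ^ 2 := by positivity
      have h8 : (0:ℝ) ≤ 1 / r ^ 2 := by positivity
      have h9 : M / r ^ 2 = K' / r ^ 2 + (C₁ * c' * CA) / r ^ 2 + (C₁ * CB / c) / r ^ 2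
          + 1 / r ^ 2 := by
        rw [hMdef, add_div, add_div, add_div]
      linarith
    calc (∫⁻ y, ENNReal.ofReal (min (dist x y ^ 2 / r ^ 2) 1 * J x y))
        = ∫⁻ y in univ, ENNReal.ofReal (min (dist x y ^ 2 / r ^ 2) 1 * J x y) :=
          (setLIntegral_univ _).symm
      _ ≤ ∫⁻ y in ({y | dist x y = 0} ∪ {y | 0 < dist x y ∧ dist x y ≤ 1})
            ∪ {y | 1 ≤ dist x y},
            ENNReal.ofReal (min (dist x y ^ 2 / r ^ 2) 1 * J x y) :=
          lintegral_mono_set cover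
      _ ≤ ((∫⁻ y in {y : EuclideanSpace ℝ (Fin n) | dist x y = 0},
              ENNReal.ofReal (min (dist x y ^ 2 / r ^ 2) 1 * J x y))
            + ∫⁻ y in {y : EuclideanSpace ℝ (Fin n) | 0 < dist x y ∧ dist x y ≤ 1},
              ENNReal.ofReal (min (dist x y ^ 2 / r ^ 2) 1 * J x y))
            + ∫⁻ y in {y : EuclideanSpace ℝ (Fin n) | 1 ≤ dist x y},
              ENNReal.ofReal (min (dist x y ^ 2 / r ^ 2) 1 * J x y) := by
          refine le_trans (lintegral_union_le _ _ _) ?_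
          gcongr
          exact lintegral_union_le _ _ _
      _ ≤ ((0 + ENNReal.ofReal (C₁ * c' * CA / r ^ 2)) + ENNReal.ofReal (m * K')) := by
          exact add_le_add (add_le_add hzero.le hN1) hfar
      _ = ENNReal.ofReal (C₁ * c' * CA / r ^ 2 + m * K') := by
          rw [zero_add, ← ENNReal.ofReal_add (by positivity) (mul_nonneg hm0 hK'0)]
      _ ≤ ENNReal.ofReal (M / φ r) := ENNReal.ofReal_le_ofReal hfinal
end

section
/- Let (M,d) be a metric space and μ a Borel measure on M such that V(x,r) := μ(B(x,r)) is finite and strictly positive for all x ∈ M and r > 0, and suppose there exist constants C_μ > 0 and d₂ > 0 such that V(x,R)/V(x,r) ≤ C_μ (R/r)^{d₂} for all x ∈ M and 0 < r ≤ R. Let φ_c : [0,∞) → [0,∞) be a strictly increasing continuous bijection satisfying c₁ (R/r)^{β₁} ≤ φ_c(R)/φ_c(r) ≤ c₂ (R/r)^{β₂} for all 0 < r ≤ R, with constants c₁, c₂ > 0 and 1 < β₁ ≤ β₂. Let ψ : [0,∞) → [0,∞) be a strictly increasing bijection with a^{-1} φ_c(r)/r ≤ ψ(r) ≤ a φ_c(r)/r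 for all r > 0, for some a ≥ 1. Then for every real k ≥ 1 there exists a constant c(k) > 0 such that for all t > 0 and all x, y ∈ M with d(x,y) ≥ φ_c^{-1}(t), (1/V(x, φ_c^{-1}(t))) · exp( - d(x,y)/ψ^{-1}(t/d(x,y)) ) ≤ c(k) · t^k / ( V(x, d(x,y)) · φ_c(d(x,y))^k ). -/
open MeasureTheory Set Real Metric

private lemma rpow_le_exp_aux {p v : ℝ} (hp : 0 < p) (hv : 1 ≤ v) :
    v ^ p ≤ Real.exp (p * Real.log p - p) * Real.exp v := by
  have hv0 : (0:ℝ) < v := lt_of_lt_of_le one_pos hv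
  rw [Real.rpow_def_of_pos hv0, ← Real.exp_add]
  apply Real.exp_le_exp.mpr
  have h1 : Real.log (v / p) ≤ v / p - 1 := Real.log_le_sub_one_of_pos (by positivity)
  rw [Real.log_div (by linarith) (ne_of_gt hp)] at h1
  have h2 := mul_le_mul_of_nonneg_left h1 hp.le
  have hvp : p * (v / p) = v := by field_simp
  nlinarith

/-- estimate (1.27): for `d(x,y) ≥ φ_c⁻¹(t)`, the sub-Gaussian term
`(1/V(x,φ_c⁻¹(t))) exp(-d(x,y)/ψ⁻¹(t/d(x,y)))` is bounded by
`c(k) t^k/(V(x,d(x,y)) φ_c(d(x,y))^k)` for every `k ≥ 1`. -/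
theorem stmt_18 {M : Type*} [MetricSpace M] [MeasurableSpace M] [BorelSpace M]
    (μ : Measure M) (V : M → ℝ → ℝ)
    (hV : ∀ x r, V x r = (μ (ball x r)).toReal)
    (hfin : ∀ (x : M) (r : ℝ), 0 < r → μ (ball x r) < ⊤)
    (hpos : ∀ (x : M) (r : ℝ), 0 < r → 0 < μ (ball x r))
    (Cμ d₂ : ℝ) (hCμ : 0 < Cμ) (hd₂ : 0 < d₂)
    (hVD : ∀ (x : M) (r R : ℝ), 0 < r → r ≤ R → V x R / V x r ≤ Cμ * (R / r) ^ d₂)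
    (φc φcInv : ℝ → ℝ) (hφc0 : φc 0 = 0)
    (hφcMono : StrictMonoOn φc (Ici 0)) (hφcCont : ContinuousOn φc (Ici 0))
    (hφcInv_nonneg : ∀ t : ℝ, 0 ≤ t → 0 ≤ φcInv t)
    (hφcInv_left : ∀ r : ℝ, 0 ≤ r → φcInv (φc r) = r)
    (hφcInv_right : ∀ t : ℝ, 0 ≤ t → φc (φcInv t) = t)
    (c₁ c₂ β₁ β₂ : ℝ) (hc₁ : 0 < c₁) (hc₂ : 0 < c₂) (hβ₁ : 1 < β₁) (hβ₁₂ : β₁ ≤ β₂)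
    (hφcScale : ∀ r R : ℝ, 0 < r → r ≤ R →
      c₁ * (R / r) ^ β₁ ≤ φc R / φc r ∧ φc R / φc r ≤ c₂ * (R / r) ^ β₂)
    (ψ ψInv : ℝ → ℝ) (a : ℝ) (ha : 1 ≤ a)
    (hψ0 : ψ 0 = 0) (hψMono : StrictMonoOn ψ (Ici 0))
    (hψInv_nonneg : ∀ t : ℝ, 0 ≤ t → 0 ≤ ψInv t)
    (hψInv_left : ∀ r : ℝ, 0 ≤ r → ψInv (ψ r) = r)
    (hψInv_right : ∀ t : ℝ, 0 ≤ t → ψ (ψInv t) = t)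
    (hψcomp : ∀ r : ℝ, 0 < r → a⁻¹ * (φc r / r) ≤ ψ r ∧ ψ r ≤ a * (φc r / r)) :
    ∀ k : ℝ, 1 ≤ k → ∃ c : ℝ, 0 < c ∧ ∀ (t : ℝ) (x y : M), 0 < t →
      φcInv t ≤ dist x y →
      (1 / V x (φcInv t)) * Real.exp (-(dist x y / ψInv (t / dist x y))) ≤
        c * t ^ k / (V x (dist x y) * φc (dist x y) ^ k) := by
  intro k hk
  have hk0 : (0:ℝ) < k := lt_of_lt_of_le one_pos hk
  have hβ₂ : 1 < β₂ := lt_of_lt_of_le hβ₁ hβ₁₂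
  have ha0 : (0:ℝ) < a := lt_of_lt_of_le one_pos ha
  have hβ₁0 : (0:ℝ) < β₁ := by linarith
  set m : ℝ := d₂ / β₁ + k with hm_def
  have hm : 0 < m := by positivity
  set K : ℝ := a * max c₂ c₁⁻¹ with hK_def
  have hmax : 0 < max c₂ c₁⁻¹ := lt_of_lt_of_le hc₂ (le_max_left _ _)
  have hK : 0 < K := mul_pos ha0 hmax
  set p : ℝ := m * (β₂ - 1) with hp_def
  have hp : 0 < p := mul_pos hm (by linarith)
  refine ⟨Cμ * c₁ ^ (-(d₂ / β₁)) * K ^ m * Real.exp (p * Real.log p - p + 1), by positivity, ?_⟩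
  intro t x y ht hd
  set r : ℝ := dist x y with hr_def
  set ρ : ℝ := φcInv t with hρ_def
  -- positivity of ρ
  have hφρ : φc ρ = t := hφcInv_right t ht.le
  have hρnn : 0 ≤ ρ := hφcInv_nonneg t ht.le
  have hρ0 : 0 < ρ := by
    rcases lt_or_eq_of_le hρnn with h | h
    · exact h
    · exfalso; rw [← h, hφc0] at hφρ; linarith
  have hr0 : 0 < r := lt_of_lt_of_le hρ0 hd
  have hφr : 0 < φc r := by
    have := hφcMono (mem_Ici.mpr le_rfl) (mem_Ici.mpr hr0.le) hr0
    rwa [hφc0] at this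
  -- s and u
  have htr : 0 < t / r := div_pos ht hr0
  set s : ℝ := ψInv (t / r) with hs_def
  have hψs : ψ s = t / r := hψInv_right _ htr.le
  have hsnn : 0 ≤ s := hψInv_nonneg _ htr.le
  have hs0 : 0 < s := by
    rcases lt_or_eq_of_le hsnn with h | h
    · exact h
    · exfalso; rw [← h, hψ0] at hψs; linarith
  have hφs : 0 < φc s := by
    have := hφcMono (mem_Ici.mpr le_rfl) (mem_Ici.mpr hs0.le) hs0
    rwa [hφc0] at this
  set u : ℝ := r / s with hu_def
  have hu0 : 0 < u := div_pos hr0 hs0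
  set w : ℝ := max u 1 with hw_def
  have hw1 : 1 ≤ w := le_max_right _ _
  have hw0 : 0 < w := lt_of_lt_of_le one_pos hw1
  -- volumes positive
  have hVpos : ∀ R : ℝ, 0 < R → 0 < V x R := by
    intro R hR
    rw [hV]
    exact ENNReal.toReal_pos (hpos x R hR).ne' (hfin x R hR).ne
  have hVρ : 0 < V x ρ := hVpos ρ hρ0
  have hVr : 0 < V x r := hVpos r hr0
  set Q : ℝ := φc r / t with hQ_def
  have hQ0 : 0 < Q := div_pos hφr ht
  -- key bound:  r * φc s ≤ a * s * t
  have hkey : r * φc s ≤ a * s * t := by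
    have h := (hψcomp s hs0).1
    rw [hψs] at h
    have h' : φc s / (a * s) ≤ t / r := by
      rw [div_le_div_iff₀ (by positivity) hr0] at *
      calc φc s * r = (a⁻¹ * (φc s / s)) * (a * s * r) := by field_simp
        _ ≤ (t / r) * (a * s * r) := by
            apply mul_le_mul_of_nonneg_right h; positivity
        _ = t * (a * s) := by field_simp
    rw [div_le_div_iff₀ (by positivity) hr0] at h'
    linarith [h']
  -- Q ≤ a * u⁻¹ * (φc r / φc s)
  have hQu : Q ≤ a * u⁻¹ * (φc r / φc s) := by
    rw [hQ_def, div_le_iff₀ ht]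
    have : a * u⁻¹ * (φc r / φc s) * t = (a * s * t) * (φc r / (r * φc s)) := by
      rw [hu_def]; field_simp
    rw [this]
    calc φc r = (r * φc s) * (φc r / (r * φc s)) := by field_simp
      _ ≤ (a * s * t) * (φc r / (r * φc s)) := by
          apply mul_le_mul_of_nonneg_right hkey; positivity
  -- Q ≤ K * w ^ (β₂ - 1)
  have hQw : Q ≤ K * w ^ (β₂ - 1) := by
    rcases le_or_gt s r with hsr | hrs
    · -- u ≥ 1, w = u
      have hu1 : 1 ≤ u := (one_le_div hs0).mpr hsr
      have hwu : w = u := max_eq_left hu1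
      have h2 := (hφcScale s r hs0 hsr).2
      have hQ2 : Q ≤ a * u⁻¹ * (c₂ * u ^ β₂) := by
        refine le_trans hQu ?_
        apply mul_le_mul_of_nonneg_left _ (by positivity)
        rwa [hu_def]
      calc Q ≤ a * u⁻¹ * (c₂ * u ^ β₂) := hQ2
        _ = (a * c₂) * (u ^ β₂ / u) := by ring
        _ = (a * c₂) * u ^ (β₂ - 1) := by
            rw [Real.rpow_sub hu0, Real.rpow_one]
        _ ≤ K * w ^ (β₂ - 1) := by
            rw [hwu]
            apply mul_le_mul_of_nonneg_right _ (Real.rpow_nonneg hu0.le _)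
            exact mul_le_mul_of_nonneg_left (le_max_left _ _) ha0.le
    · -- u < 1
      have hu1 : u < 1 := (div_lt_one hs0).mpr hrs
      have h1 := (hφcScale r s hr0 hrs.le).1
      have hsr' : (s / r : ℝ) = u⁻¹ := by rw [hu_def]; field_simp
      have hfr : φc r / φc s ≤ c₁⁻¹ * u ^ β₁ := by
        have h1' : c₁ * (u ^ β₁)⁻¹ ≤ φc s / φc r := by
          rw [hsr'] at h1; rwa [Real.inv_rpow hu0.le] at h1
        have hub : (0:ℝ) < u ^ β₁ := Real.rpow_pos_of_pos hu0 β₁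
        rw [div_le_iff₀ hφs]
        rw [le_div_iff₀ hφr] at h1'
        calc φc r = (c₁⁻¹ * u ^ β₁) * (c₁ * (u ^ β₁)⁻¹ * φc r) := by field_simp
          _ ≤ (c₁⁻¹ * u ^ β₁) * φc s := by
              apply mul_le_mul_of_nonneg_left h1'; positivity
      calc Q ≤ a * u⁻¹ * (c₁⁻¹ * u ^ β₁) := by
            refine le_trans hQu ?_
            exact mul_le_mul_of_nonneg_left hfr (by positivity)
        _ = (a * c₁⁻¹) * (u ^ β₁ / u) := by ring
        _ = (a * c₁⁻¹) * u ^ (β₁ - 1) := by rw [Real.rpow_sub hu0, Real.rpow_one]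
        _ ≤ (a * c₁⁻¹) * 1 := by
            apply mul_le_mul_of_nonneg_left _ (by positivity)
            exact Real.rpow_le_one hu0.le hu1.le (by linarith)
        _ = a * c₁⁻¹ := mul_one _
        _ ≤ K := mul_le_mul_of_nonneg_left (le_max_right _ _) ha0.le
        _ ≤ K * w ^ (β₂ - 1) := by
            nth_rewrite 1 [← mul_one K]
            apply mul_le_mul_of_nonneg_left _ hK.le
            exact Real.one_le_rpow hw1 (by linarith)
  -- (r/ρ)^d₂ ≤ (Q/c₁)^(d₂/β₁)
  have hrρ : c₁ * (r / ρ) ^ β₁ ≤ Q := by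
    have h := (hφcScale ρ r hρ0 hd).1
    rwa [hφρ] at h
  have hrρ0 : 0 < r / ρ := div_pos hr0 hρ0
  have hQc₁ : 0 < Q / c₁ := div_pos hQ0 hc₁
  have hstep : (r / ρ) ^ d₂ ≤ (Q / c₁) ^ (d₂ / β₁) := by
    have h1 : (r / ρ) ^ β₁ ≤ Q / c₁ := (le_div_iff₀' hc₁).mpr hrρ
    have h2 : r / ρ ≤ (Q / c₁) ^ (β₁⁻¹) := by
      have := Real.rpow_le_rpow (Real.rpow_nonneg hrρ0.le β₁) h1 (inv_nonneg.mpr hβ₁0.le)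
      rwa [← Real.rpow_mul hrρ0.le, mul_inv_cancel₀ hβ₁0.ne', Real.rpow_one] at this
    calc (r / ρ) ^ d₂ ≤ ((Q / c₁) ^ (β₁⁻¹)) ^ d₂ :=
          Real.rpow_le_rpow hrρ0.le h2 hd₂.le
      _ = (Q / c₁) ^ (d₂ / β₁) := by
          rw [← Real.rpow_mul hQc₁.le, inv_mul_eq_div]
  -- main chain
  have hVD' : V x r / V x ρ ≤ Cμ * (r / ρ) ^ d₂ := hVD x ρ r hρ0 hd
  have hchain : V x r / V x ρ * Q ^ k ≤
      Cμ * c₁ ^ (-(d₂ / β₁)) * K ^ m * Real.exp (p * Real.log p - p + 1) * Real.exp u := by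
    have hQk : (0:ℝ) ≤ Q ^ k := Real.rpow_nonneg hQ0.le k
    have hA : V x r / V x ρ * Q ^ k ≤ Cμ * (Q / c₁) ^ (d₂ / β₁) * Q ^ k := by
      apply mul_le_mul_of_nonneg_right _ hQk
      exact le_trans hVD' (mul_le_mul_of_nonneg_left hstep hCμ.le)
    have hB : Cμ * (Q / c₁) ^ (d₂ / β₁) * Q ^ k
        = Cμ * c₁ ^ (-(d₂ / β₁)) * Q ^ m := by
      rw [Real.div_rpow hQ0.le hc₁.le, Real.rpow_neg hc₁.le, hm_def,
        Real.rpow_add hQ0]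
      ring
    have hC : Q ^ m ≤ K ^ m * w ^ p := by
      calc Q ^ m ≤ (K * w ^ (β₂ - 1)) ^ m := Real.rpow_le_rpow hQ0.le hQw hm.le
        _ = K ^ m * (w ^ (β₂ - 1)) ^ m :=
            Real.mul_rpow hK.le (Real.rpow_nonneg hw0.le _)
        _ = K ^ m * w ^ p := by
            rw [← Real.rpow_mul hw0.le, hp_def]; ring_nf
    have hD : w ^ p ≤ Real.exp (p * Real.log p - p + 1) * Real.exp u := by
      calc w ^ p ≤ Real.exp (p * Real.log p - p) * Real.exp w := rpow_le_exp_aux hp hw1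
        _ ≤ Real.exp (p * Real.log p - p) * Real.exp (u + 1) := by
            apply mul_le_mul_of_nonneg_left _ (Real.exp_pos _).le
            apply Real.exp_le_exp.mpr
            exact max_le (by linarith) (by linarith)
        _ = Real.exp (p * Real.log p - p + 1) * Real.exp u := by
            rw [← Real.exp_add, ← Real.exp_add]; ring_nf
    calc V x r / V x ρ * Q ^ k ≤ Cμ * c₁ ^ (-(d₂ / β₁)) * Q ^ m := by rw [← hB]; exact hA
      _ ≤ Cμ * c₁ ^ (-(d₂ / β₁)) * (K ^ m * (Real.exp (p * Real.log p - p + 1) * Real.exp u)) := by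
          apply mul_le_mul_of_nonneg_left _ (by positivity)
          exact le_trans hC (mul_le_mul_of_nonneg_left hD (Real.rpow_nonneg hK.le m))
      _ = Cμ * c₁ ^ (-(d₂ / β₁)) * K ^ m * Real.exp (p * Real.log p - p + 1) * Real.exp u := by
          ring
  -- conclude
  have htk : (0:ℝ) < t ^ k := Real.rpow_pos_of_pos ht k
  have hφrk : (0:ℝ) < φc r ^ k := Real.rpow_pos_of_pos hφr k
  have hQt : φc r ^ k = Q ^ k * t ^ k := by
    rw [hQ_def, Real.div_rpow hφr.le ht.le]
    field_simp
  rw [show (1 / V x ρ) * Real.exp (-(r / ψInv (t / r))) = Real.exp (-u) / V x ρ by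
      rw [hu_def, hs_def]; ring]
  rw [div_le_div_iff₀ hVρ (by positivity)]
  have hexp : Real.exp (-u) * Real.exp u = 1 := by
    rw [← Real.exp_add]; simp
  have hfinal : V x r * φc r ^ k ≤
      (Cμ * c₁ ^ (-(d₂ / β₁)) * K ^ m * Real.exp (p * Real.log p - p + 1)) * t ^ k
        * V x ρ * Real.exp u := by
    have := mul_le_mul_of_nonneg_right hchain (mul_pos hVρ htk).le
    calc V x r * φc r ^ k = (V x r / V x ρ * Q ^ k) * (V x ρ * t ^ k) := by
          rw [hQt]; field_simp
      _ ≤ (Cμ * c₁ ^ (-(d₂ / β₁)) * K ^ m * Real.exp (p * Real.log p - p + 1) * Real.exp u)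
            * (V x ρ * t ^ k) := this
      _ = (Cμ * c₁ ^ (-(d₂ / β₁)) * K ^ m * Real.exp (p * Real.log p - p + 1)) * t ^ k
            * V x ρ * Real.exp u := by ring
  calc Real.exp (-u) * (V x r * φc r ^ k)
      ≤ Real.exp (-u) * ((Cμ * c₁ ^ (-(d₂ / β₁)) * K ^ m * Real.exp (p * Real.log p - p + 1))
          * t ^ k * V x ρ * Real.exp u) :=
        mul_le_mul_of_nonneg_left hfinal (Real.exp_pos _).le
    _ = (Cμ * c₁ ^ (-(d₂ / β₁)) * K ^ m * Real.exp (p * Real.log p - p + 1)) * t ^ k * V x ρ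
          * (Real.exp (-u) * Real.exp u) := by ring
    _ = Cμ * c₁ ^ (-(d₂ / β₁)) * K ^ m * Real.exp (p * Real.log p - p + 1) * t ^ k * V x ρ := by
          rw [hexp, mul_one]
end

section
/- Let (M,d) be a metric space and μ a Borel measure on M such that V(x,r) := μ(B(x,r)) is finite and strictly positive for all x ∈ M and r > 0, and suppose there exist constants C_μ > 0 and d₂ > 0 such that V(x,R)/V(x,r) ≤ C_μ (R/r)^{d₂} for all x ∈ M and 0 < r ≤ R. Let β > 1 and c > 0. Then there exists a constant C > 0 such that for all x ∈ M and all u, r > 0, ∫_{M ∖ B(x,r)} (1/V(x, u^{1/β})) · exp( - c (d(x,y)^β / u)^{1/(β-1)} ) dμ(y) ≤ C · u / r^β. -/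
open MeasureTheory Set Real Metric ENNReal

lemma aux_rpow_exp {β c d₂ : ℝ} (hβ : 1 < β) (hc : 0 < c) {w : ℝ} (hw : 1 ≤ w) :
    w ^ d₂ * Real.exp (-(c * w ^ (β / (β - 1)))) ≤
      ((Nat.ceil (d₂ + β)).factorial / c ^ (Nat.ceil (d₂ + β))) * w ^ (-β) := by
  have hw0 : (0:ℝ) < w := lt_of_lt_of_le one_pos hw
  set n := Nat.ceil (d₂ + β) with hn
  set z := w ^ (β / (β - 1)) with hz
  have hz0 : 0 ≤ z := Real.rpow_nonneg hw0.le _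
  have hwz : w ≤ z := by
    nth_rewrite 1 [← Real.rpow_one w]
    apply Real.rpow_le_rpow_of_exponent_le hw
    rw [le_div_iff₀ (by linarith)]; linarith
  have key := Real.pow_div_factorial_le_exp (x := c*z) (mul_nonneg hc.le hz0) n
  have h1 : w ^ (d₂ + β) ≤ (n.factorial / c ^ n) * Real.exp (c * z) := by
    calc w ^ (d₂ + β) ≤ w ^ ((n:ℕ) : ℝ) :=
          Real.rpow_le_rpow_of_exponent_le hw (Nat.le_ceil _)
      _ = w ^ (n:ℕ) := Real.rpow_natCast w n
      _ ≤ z ^ (n:ℕ) := pow_le_pow_left₀ hw0.le hwz n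
      _ ≤ (n.factorial / c ^ n) * Real.exp (c * z) := by
          rw [div_mul_eq_mul_div, le_div_iff₀ (pow_pos hc n)]
          have h2 : ((c*z) ^ n) ≤ (n.factorial : ℝ) * Real.exp (c*z) := by
            rw [div_le_iff₀ (by exact_mod_cast n.factorial_pos : (0:ℝ) < n.factorial)] at key
            linarith [key]
          calc z ^ n * c ^ n = (c*z)^n := by rw [mul_pow]; ring
            _ ≤ (n.factorial : ℝ) * Real.exp (c*z) := h2
  have hsplit : w ^ d₂ = w ^ (d₂ + β) * w ^ (-β) := by
    rw [← Real.rpow_add hw0]; ring_nf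
  rw [hsplit, Real.exp_neg]
  have hwb : 0 ≤ w ^ (-β) := Real.rpow_nonneg hw0.le _
  have hei : 0 < Real.exp (c*z) := Real.exp_pos _
  calc w ^ (d₂ + β) * w ^ (-β) * (Real.exp (c*z))⁻¹
      ≤ ((n.factorial / c ^ n) * Real.exp (c * z)) * w ^ (-β) * (Real.exp (c*z))⁻¹ := by
        gcongr
    _ = (n.factorial / c ^ n) * w ^ (-β) := by field_simp

set_option maxHeartbeats 2000000 in
/-- under volume doubling, the sub-Gaussian tail estimate
`∫_{B(x,r)ᶜ} (1/V(x,u^{1/β})) exp(-c (d(x,y)^β/u)^{1/(β-1)}) μ(dy) ≤ C u/r^β`. -/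
theorem stmt_19 {M : Type*} [MetricSpace M] [MeasurableSpace M] [BorelSpace M]
    (μ : Measure M) (V : M → ℝ → ℝ)
    (hV : ∀ x r, V x r = (μ (ball x r)).toReal)
    (hfin : ∀ (x : M) (r : ℝ), 0 < r → μ (ball x r) < ⊤)
    (hpos : ∀ (x : M) (r : ℝ), 0 < r → 0 < μ (ball x r))
    (Cμ d₂ : ℝ) (hCμ : 0 < Cμ) (hd₂ : 0 < d₂)
    (hVD : ∀ (x : M) (r R : ℝ), 0 < r → r ≤ R → V x R / V x r ≤ Cμ * (R / r) ^ d₂)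
    (β c : ℝ) (hβ : 1 < β) (hc : 0 < c) :
    ∃ C : ℝ, 0 < C ∧ ∀ (x : M) (u r : ℝ), 0 < u → 0 < r →
      (∫⁻ y in (ball x r)ᶜ,
        ENNReal.ofReal ((1 / V x (u ^ (1 / β))) *
          Real.exp (-(c * (dist x y ^ β / u) ^ (1 / (β - 1))))) ∂μ) ≤
      ENNReal.ofReal (C * u / r ^ β) := by
  classical
  have hβ0 : (0:ℝ) < β := by linarith
  have hβ1 : (0:ℝ) < β - 1 := by linarith
  set n := Nat.ceil (d₂ + β) with hn
  set K : ℝ := n.factorial / c ^ n with hK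
  have hK0 : 0 < K := div_pos (by exact_mod_cast n.factorial_pos) (pow_pos hc n)
  set D : ℝ := Cμ * 2 ^ d₂ * Real.exp c * K with hD
  have h2d : (0:ℝ) < 2 ^ d₂ := Real.rpow_pos_of_pos two_pos _
  have hD0 : 0 < D := by positivity
  refine ⟨2 * D, by positivity, ?_⟩
  intro x u r hu hr
  set ρ : ℝ := u ^ (1/β) with hρdef
  have hρ : 0 < ρ := Real.rpow_pos_of_pos hu _
  have hρβ : ρ ^ β = u := by
    rw [hρdef, ← Real.rpow_mul hu.le, one_div, inv_mul_cancel₀ hβ0.ne', Real.rpow_one]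
  set r₀ : ℝ := max r ρ with hr₀def
  have hr₀ : 0 < r₀ := lt_max_iff.2 (Or.inl hr)
  have hρr₀ : ρ ≤ r₀ := le_max_right _ _
  have hrr₀ : r ≤ r₀ := le_max_left _ _
  set Vρ : ℝ := V x ρ with hVρdef
  have hVρ : 0 < Vρ := by
    rw [hVρdef, hV]; exact ENNReal.toReal_pos (hpos x ρ hρ).ne' (hfin x ρ hρ).ne
  set s₀ : ℝ := r₀ / ρ with hs₀def
  have hs₀ : 1 ≤ s₀ := (one_le_div hρ).2 hρr₀
  have hs₀0 : 0 < s₀ := lt_of_lt_of_le one_pos hs₀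
  have hid : ∀ a : ℝ, 0 < a → (a ^ β / u) ^ (1/(β-1)) = (a / ρ) ^ (β/(β-1)) := by
    intro a ha
    have h1 : a ^ β / u = (a / ρ) ^ β := by rw [Real.div_rpow ha.le hρ.le, hρβ]
    rw [h1, ← Real.rpow_mul (by positivity), mul_one_div]
  set f : M → ℝ≥0∞ := fun y =>
    ENNReal.ofReal ((1 / Vρ) * Real.exp (-(c * (dist x y ^ β / u) ^ (1/(β-1))))) with hf
  set E : ℕ → ℝ := fun k => if k = 0 then r else 2 ^ k * r₀ with hE
  set T : ℕ → Set M := fun k => ball x (2 ^ (k+1) * r₀) \ ball x (E k) with hT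
  have hcover : (ball x r)ᶜ ⊆ ⋃ k, T k := by
    intro y hy
    simp only [mem_compl_iff, mem_ball, not_lt] at hy
    rcases lt_or_ge (dist y x) (2 * r₀) with h0 | h0
    · refine mem_iUnion.2 ⟨0, ⟨?_, ?_⟩⟩
      · simp only [mem_ball, zero_add, pow_one]; linarith
      · simp only [hE, mem_ball, if_pos rfl, not_lt]; exact hy
    · have hd2 : (2:ℝ) ≤ dist y x / r₀ := by rw [le_div_iff₀ hr₀]; linarith
      obtain ⟨k, hk1, hk2⟩ := exists_nat_pow_near (le_trans one_le_two hd2) one_lt_two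
      have hk0 : k ≠ 0 := by
        intro h; subst h; simp only [pow_zero, pow_one] at hk1 hk2; linarith
      refine mem_iUnion.2 ⟨k, ⟨?_, ?_⟩⟩
      · simp only [mem_ball]
        rw [div_lt_iff₀ hr₀] at hk2; linarith [hk2]
      · simp only [hE, mem_ball, if_neg hk0, not_lt]
        rw [le_div_iff₀ hr₀] at hk1; linarith [hk1]
  have hμball : ∀ R : ℝ, 0 < R → μ (ball x R) = ENNReal.ofReal (V x R) := by
    intro R hR; rw [hV, ENNReal.ofReal_toReal (hfin x R hR).ne]
  have hbound : ∀ k : ℕ, ∫⁻ y in T k, f y ∂μ ≤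
      ENNReal.ofReal ((D * (u / r ^ β)) * (1/2)^k) := by
    intro k
    have h2k : (1:ℝ) ≤ 2 ^ k := one_le_pow₀ one_le_two
    have h2k1 : (1:ℝ) ≤ 2 ^ (k+1) := one_le_pow₀ one_le_two
    have hEk : 0 < E k := by
      rw [hE]; dsimp only; split
      · exact hr
      · positivity
    set Rk : ℝ := 2 ^ (k+1) * r₀ with hRkdef
    have hRk : 0 < Rk := by positivity
    have hρRk : ρ ≤ Rk := le_trans hρr₀ (le_mul_of_one_le_left hr₀.le h2k1)
    set Mk : ℝ := (1 / Vρ) * Real.exp (-(c * ((E k) ^ β / u) ^ (1/(β-1)))) with hMk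
    have hMk0 : 0 ≤ Mk := by positivity
    have hpt : ∀ y ∈ T k, f y ≤ ENNReal.ofReal Mk := by
      intro y hy
      have hd : E k ≤ dist x y := by
        have h := hy.2
        simp only [mem_ball, not_lt] at h
        rw [dist_comm]; exact h
      apply ENNReal.ofReal_le_ofReal
      have hXY : ((E k) ^ β / u) ^ (1/(β-1)) ≤ ((dist x y) ^ β / u) ^ (1/(β-1)) := by
        have hnum : (E k) ^ β ≤ dist x y ^ β := Real.rpow_le_rpow hEk.le hd hβ0.le
        apply Real.rpow_le_rpow (by positivity) ?_ (by positivity)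
        gcongr
      have hee := Real.exp_le_exp.2 (neg_le_neg (mul_le_mul_of_nonneg_left hXY hc.le))
      exact mul_le_mul_of_nonneg_left hee (by positivity)
    have hTmeas : MeasurableSet (T k) := measurableSet_ball.diff measurableSet_ball
    have hreal : Mk * V x Rk ≤ (D * (u / r ^ β)) * (1/2)^k := by
      have hVR0 : 0 ≤ V x Rk := by rw [hV]; exact ENNReal.toReal_nonneg
      have hratio : V x Rk ≤ Cμ * (Rk / ρ) ^ d₂ * Vρ := by
        have h := hVD x ρ Rk hρ hρRk
        rw [div_le_iff₀ hVρ] at h; exact h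
      set w : ℝ := 2 ^ k * s₀ with hw
      have hw1 : (1:ℝ) ≤ w := by rw [hw]; nlinarith
      have hw0 : (0:ℝ) < w := lt_of_lt_of_le one_pos hw1
      have hexp : Real.exp (-(c * ((E k) ^ β / u) ^ (1/(β-1)))) ≤
          Real.exp c * Real.exp (-(c * w ^ (β/(β-1)))) := by
        by_cases hk0 : k = 0
        · subst hk0
          simp only [hE, if_pos rfl, hw, pow_zero, one_mul]
          rcases le_total ρ r with hcase | hcase
          · have hmax : r₀ = r := max_eq_left hcase
            have : s₀ = r / ρ := by rw [hs₀def, hmax]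
            rw [this, ← hid r hr]
            exact le_mul_of_one_le_left (Real.exp_pos _).le (Real.one_le_exp hc.le)
          · have hmax : r₀ = ρ := max_eq_right hcase
            have hs1 : s₀ = 1 := by rw [hs₀def, hmax, div_self hρ.ne']
            rw [hs1, Real.one_rpow, mul_one, ← Real.exp_add, add_neg_cancel, Real.exp_zero]
            apply Real.exp_le_one_iff.2
            have : 0 ≤ (r ^ β / u) ^ (1/(β-1)) := by positivity
            nlinarith
        · simp only [hE, if_neg hk0]
          rw [hid (2 ^ k * r₀) (by positivity), hw, hs₀def, mul_div_assoc]
          exact le_mul_of_one_le_left (Real.exp_pos _).le (Real.one_le_exp hc.le)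
      have hRkρ : Rk / ρ = 2 * w := by
        rw [hRkdef, hw, hs₀def, pow_succ]; field_simp
      have hL1 := aux_rpow_exp (d₂ := d₂) hβ hc hw1
      have hgeo : w ^ (-β) ≤ (1/2)^k * (u / r ^ β) := by
        have h1 : w ^ (-β) = ((2:ℝ) ^ k) ^ (-β) * s₀ ^ (-β) := by
          rw [hw, Real.mul_rpow (by positivity) (by positivity)]
        have h2 : ((2:ℝ) ^ k) ^ (-β) ≤ (1/2)^k := by
          rw [← Real.rpow_natCast 2 k, ← Real.rpow_mul (by norm_num)]
          calc (2:ℝ) ^ ((k:ℝ) * (-β)) ≤ 2 ^ (-(k:ℝ)) := by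
                apply Real.rpow_le_rpow_of_exponent_le one_le_two
                have : (0:ℝ) ≤ (k:ℝ) := Nat.cast_nonneg k
                nlinarith
            _ = (1/2)^k := by
                rw [Real.rpow_neg (by norm_num), Real.rpow_natCast, one_div, inv_pow]
        have h3 : s₀ ^ (-β) ≤ u / r ^ β := by
          have h4 : r / ρ ≤ s₀ := by rw [hs₀def]; gcongr
          have h5 : s₀ ^ (-β) ≤ (r/ρ) ^ (-β) := by
            rw [Real.rpow_neg (by positivity), Real.rpow_neg (by positivity)]
            apply inv_anti₀ (Real.rpow_pos_of_pos (by positivity) _)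
            exact Real.rpow_le_rpow (by positivity) h4 hβ0.le
          have h6 : (r/ρ) ^ (-β) = u / r ^ β := by
            rw [Real.rpow_neg (by positivity), Real.div_rpow hr.le hρ.le, hρβ, inv_div]
          linarith
        calc w ^ (-β) = ((2:ℝ) ^ k) ^ (-β) * s₀ ^ (-β) := h1
          _ ≤ (1/2)^k * (u / r ^ β) := by
              apply mul_le_mul h2 h3 (Real.rpow_nonneg (by positivity) _) (by positivity)
      calc Mk * V x Rk
          ≤ ((1 / Vρ) * (Real.exp c * Real.exp (-(c * w ^ (β/(β-1)))))) *
            (Cμ * (2*w) ^ d₂ * Vρ) := by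
            rw [← hRkρ]
            apply mul_le_mul ?_ hratio hVR0 (by positivity)
            exact mul_le_mul_of_nonneg_left hexp (by positivity)
        _ = (Cμ * 2 ^ d₂ * Real.exp c) * (w ^ d₂ * Real.exp (-(c * w ^ (β/(β-1))))) := by
            rw [Real.mul_rpow (by norm_num) hw0.le]
            field_simp
        _ ≤ (Cμ * 2 ^ d₂ * Real.exp c) * (K * w ^ (-β)) := by
            apply mul_le_mul_of_nonneg_left hL1 (by positivity)
        _ = D * w ^ (-β) := by rw [hD]; ring
        _ ≤ D * ((1/2)^k * (u / r ^ β)) := mul_le_mul_of_nonneg_left hgeo hD0.le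
        _ = (D * (u / r ^ β)) * (1/2)^k := by ring
    calc ∫⁻ y in T k, f y ∂μ ≤ ∫⁻ _ in T k, ENNReal.ofReal Mk ∂μ :=
          setLIntegral_mono' hTmeas hpt
      _ = ENNReal.ofReal Mk * μ (T k) := setLIntegral_const _ _
      _ ≤ ENNReal.ofReal Mk * μ (ball x Rk) :=
          mul_le_mul_right (measure_mono diff_subset) _
      _ = ENNReal.ofReal (Mk * V x Rk) := by
          rw [hμball Rk hRk, ← ENNReal.ofReal_mul hMk0]
      _ ≤ ENNReal.ofReal ((D * (u / r ^ β)) * (1/2)^k) := ENNReal.ofReal_le_ofReal hreal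
  have hfin2 : (∑' k : ℕ, ENNReal.ofReal ((D * (u / r ^ β)) * (1/2)^k)) =
      ENNReal.ofReal (D * (u / r ^ β)) * 2 := by
    have hDX : (0:ℝ) ≤ D * (u / r ^ β) := by positivity
    have h12 : ENNReal.ofReal (1/2 : ℝ) = 2⁻¹ := by
      rw [one_div, ENNReal.ofReal_inv_of_pos two_pos, ENNReal.ofReal_ofNat]
    calc (∑' k : ℕ, ENNReal.ofReal ((D * (u / r ^ β)) * (1/2)^k))
        = ∑' k : ℕ, ENNReal.ofReal (D * (u / r ^ β)) * (ENNReal.ofReal (1/2))^k := by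
          congr 1; funext k
          rw [ENNReal.ofReal_mul hDX, ENNReal.ofReal_pow (by norm_num)]
      _ = ENNReal.ofReal (D * (u / r ^ β)) * ∑' k : ℕ, (ENNReal.ofReal (1/2))^k :=
          ENNReal.tsum_mul_left
      _ = ENNReal.ofReal (D * (u / r ^ β)) * 2 := by
          rw [h12, ENNReal.tsum_geometric]
          congr 1
          rw [ENNReal.one_sub_inv_two]
          simp
  calc (∫⁻ y in (ball x r)ᶜ, f y ∂μ)
      ≤ ∫⁻ y in ⋃ k, T k, f y ∂μ := lintegral_mono_set hcover
    _ ≤ ∑' k : ℕ, ∫⁻ y in T k, f y ∂μ := lintegral_iUnion_le _ _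
    _ ≤ ∑' k : ℕ, ENNReal.ofReal ((D * (u / r ^ β)) * (1/2)^k) :=
        ENNReal.tsum_le_tsum hbound
    _ = ENNReal.ofReal (D * (u / r ^ β)) * 2 := hfin2
    _ = ENNReal.ofReal (2 * D * u / r ^ β) := by
        rw [mul_comm, ← ENNReal.ofReal_ofNat, ← ENNReal.ofReal_mul (by norm_num)]
        congr 1; ring
end
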